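/- Let k > r ≥ 4 and n > 2k+1, and let H be a connected r-graph on n vertices with δ1(H) ≥ C(k, r−1). Then ℓ(H) ≥ 2k. Moreover, if ℓ(H) = 2k, then every longest Berge path P in H, with edges e_1,...,e_{2k} and key vertices v_0,v_1,...,v_{2k}, satisfies |K_0(P)| = |K_{2k}(P)| = k. -/

import Mathlib

namespace Berge

variable {V : Type*} [DecidableEq V] [Fintype V]

/-- `E` is the edge set of an `r`-uniform hypergraph (`r`-graph) on `V`. -/
def IsRGraph (r : ℕ) (E : Finset (Finset V)) : Prop :=
  ∀ e ∈ E, e.card = r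

/-- The degree of a vertex: the number of edges containing it. -/
def deg (E : Finset (Finset V)) (x : V) : ℕ :=
  (E.filter fun e => x ∈ e).card

/-- The minimum degree `δ₁`. -/
noncomputable def minDeg (E : Finset (Finset V)) : ℕ :=
  sInf {d | ∃ x : V, deg E x = d}

/-- A Berge path of length `t`: distinct vertices `v 0, ..., v t` and distinct edges
`f 0, ..., f (t-1)` (here `f i` plays the role of the edge `e_{i+1}` of the paper),
with `{v i, v (i+1)} ⊆ f i`. -/
def IsBergePath (E : Finset (Finset V)) (t : ℕ)
    (v : Fin (t + 1) → V) (f : Fin t → Finset V) : Prop :=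
  Function.Injective v ∧ Function.Injective f ∧ (∀ i, f i ∈ E) ∧
    ∀ i : Fin t, v i.castSucc ∈ f i ∧ v i.succ ∈ f i

/-- `H` is connected: any two vertices are connected by a Berge path. -/
def Connected (E : Finset (Finset V)) : Prop :=
  ∀ u w : V, ∃ (t : ℕ) (v : Fin (t + 1) → V) (f : Fin t → Finset V),
    IsBergePath E t v f ∧ v 0 = u ∧ v (Fin.last t) = w

/-- `ℓ(H)`: the length of a longest Berge path. -/
noncomputable def pathLen (E : Finset (Finset V)) : ℕ :=
  sSup {t | ∃ (v : Fin (t + 1) → V) (f : Fin t → Finset V), IsBergePath E t v f}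

/-- A Berge cycle of length `t`: distinct vertices `v 0, ..., v (t-1)` and distinct
edges `f 0, ..., f (t-1)` with `{v (i-1), v i} ⊆ f i` (indices mod `t`), equivalently
`v i ∈ f i` and `v i ∈ f (i+1)` for all `i`. -/
def IsBergeCycle (E : Finset (Finset V)) (t : ℕ)
    (v : Fin t → V) (f : Fin t → Finset V) : Prop :=
  Function.Injective v ∧ Function.Injective f ∧ (∀ i, f i ∈ E) ∧
    ∀ i : Fin t, v i ∈ f i ∧ v i ∈ f ⟨((i : ℕ) + 1) % t, Nat.mod_lt _ i.pos⟩

/-- `c(H)`: the length of a longest Berge cycle. -/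
noncomputable def cycLen (E : Finset (Finset V)) : ℕ :=
  sSup {t | ∃ (v : Fin t → V) (f : Fin t → Finset V), IsBergeCycle E t v f}

/-- `E^O(P, w)`: the edges of `H` outside `P` that contain `w`. -/
def EO (E : Finset (Finset V)) {t : ℕ} (f : Fin t → Finset V) (w : V) :
    Set (Finset V) :=
  {e | e ∈ E ∧ e ∉ Set.range f ∧ w ∈ e}

/-- `K(P, w)`: the key vertices of `P` other than `w` that lie on some edge of
`E^O(P, w)`.  For `w = v a` with `a ∈ {0, t}` this is `K_a(P)`; for `w ∉ K(P)` this
is `K_w(P)`. -/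
def KsetP (E : Finset (Finset V)) {t : ℕ} (v : Fin (t + 1) → V)
    (f : Fin t → Finset V) (w : V) : Set V :=
  {x | (∃ i, v i = x) ∧ x ≠ w ∧ ∃ e ∈ EO E f w, x ∈ e}

/-- `κ(P, w)`: the set of indices of the vertices in `K(P, w)` (as integers). -/
def kappa (E : Finset (Finset V)) {t : ℕ} (v : Fin (t + 1) → V)
    (f : Fin t → Finset V) (w : V) : Set ℤ :=
  {i : ℤ | ∃ j : Fin (t + 1), ((j : ℕ) : ℤ) = i ∧ v j ∈ KsetP E v f w}

/-- `E^I(P, w)`: the edges of `P` that contain `w`. -/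
def EIset {t : ℕ} (f : Fin t → Finset V) (w : V) : Set (Finset V) :=
  {e | e ∈ Set.range f ∧ w ∈ e}

/-- `ε^i(P, w)`: the (1-based, as in the paper) indices of the edges of `P`
containing `w`, as integers; so `i ∈ ε^i(P, w)` iff `w ∈ e_i = f (i-1)`. -/
def epsi {t : ℕ} (f : Fin t → Finset V) (w : V) : Set ℤ :=
  {i : ℤ | ∃ j : Fin t, ((j : ℕ) : ℤ) + 1 = i ∧ w ∈ f j}

/-- `N_H(x) = {T : T ∪ {x} ∈ E(H)}` (with `x ∉ T`). -/
def NH (E : Finset (Finset V)) (x : V) : Set (Finset V) :=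
  {T | x ∉ T ∧ insert x T ∈ E}

/-- The edge set of `S_r(n, k)` on the vertex set `V` (`|V| = n`), where `A ⊆ V` is
the distinguished `k`-set: all `r`-sets `e` with `|e ∩ (V \ A)| ≤ 1`. -/
def Sr (r : ℕ) (A : Finset V) : Finset (Finset V) :=
  Finset.univ.filter fun e : Finset V => e.card = r ∧ (e \ A).card ≤ 1

/-- The edge set of `S'_r(n, k)`: all `r`-sets `e` with `|e ∩ (V \ A)| = 1`. -/
def Sr' (r : ℕ) (A : Finset V) : Finset (Finset V) :=
  Finset.univ.filter fun e : Finset V => e.card = r ∧ (e \ A).card = 1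

/-- The edge set of `S(sK^r_{k+1}, 1)` determined by the cliques `B 0, ..., B (s-1)`:
all `r`-subsets of some `B i`. -/
def SK (r : ℕ) {s : ℕ} (B : Fin s → Finset V) : Finset (Finset V) :=
  Finset.univ.filter fun e : Finset V => e.card = r ∧ ∃ i, e ⊆ B i

/-- `H` is isomorphic to `S(sK^r_{k+1}, 1)`: there are `s` cliques of size `k+1`
pairwise meeting exactly in a common center `c` and covering `V`, and the edges of
`H` are exactly the `r`-subsets of the cliques. -/
def IsStarOfCliques (r k s : ℕ) (E : Finset (Finset V)) : Prop :=
  ∃ (c : V) (B : Fin s → Finset V),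
    (∀ i, (B i).card = k + 1) ∧ (∀ i, c ∈ B i) ∧
    (∀ i j, i ≠ j → B i ∩ B j = {c}) ∧
    Finset.univ.biUnion B = Finset.univ ∧
    E = SK r B



section Machinery
set_option linter.unusedSectionVars false

variable {E : Finset (Finset V)}

/-- Berge path with `ℕ`-indexing (easier surgery than `Fin`). -/
def NPath (E : Finset (Finset V)) (t : ℕ) (v : ℕ → V) (f : ℕ → Finset V) : Prop :=
  (∀ i ≤ t, ∀ j ≤ t, v i = v j → i = j) ∧
  (∀ i < t, ∀ j < t, f i = f j → i = j) ∧
  (∀ i < t, f i ∈ E) ∧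
  (∀ i < t, v i ∈ f i ∧ v (i+1) ∈ f i)

lemma NPath.toBerge {t : ℕ} {v : ℕ → V} {f : ℕ → Finset V} (h : NPath E t v f) :
    IsBergePath E t (fun i : Fin (t+1) => v i) (fun i : Fin t => f i) := by
  obtain ⟨h1, h2, h3, h4⟩ := h
  refine ⟨?_, ?_, fun i => h3 i i.isLt, fun i => ?_⟩
  · intro i j hij
    exact Fin.ext (h1 i (Nat.lt_succ_iff.mp i.isLt) j (Nat.lt_succ_iff.mp j.isLt) hij)
  · intro i j hij
    exact Fin.ext (h2 i i.isLt j j.isLt hij)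
  · have := h4 i i.isLt
    simpa using this

lemma NPath.le_pathLen {t : ℕ} {v : ℕ → V} {f : ℕ → Finset V} (h : NPath E t v f) :
    t ≤ pathLen E := by
  apply le_csSup
  · refine ⟨Fintype.card V, fun s hs => ?_⟩
    obtain ⟨w, g, hw⟩ := hs
    have := Fintype.card_le_of_injective w hw.1
    simp only [Fintype.card_fin] at this
    omega
  · exact ⟨_, _, h.toBerge⟩

lemma IsBergePath.toNPath {t : ℕ} {v : Fin (t+1) → V} {f : Fin t → Finset V}
    (h : IsBergePath E t v f) :
    NPath E t (fun i => v ⟨min i t, by omega⟩)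
      (fun i => if hi : i < t then f ⟨i, hi⟩ else ∅) := by
  obtain ⟨h1, h2, h3, h4⟩ := h
  refine ⟨?_, ?_, ?_, ?_⟩
  · intro i hi j hj hij
    have := h1 hij
    have : min i t = min j t := congrArg Fin.val this
    omega
  · intro i hi j hj hij
    dsimp only at hij
    rw [dif_pos hi, dif_pos hj] at hij
    have := h2 hij
    have : i = j := congrArg Fin.val this
    exact this
  · intro i hi
    dsimp only
    rw [dif_pos hi]; exact h3 _
  · intro i hi
    dsimp only
    rw [dif_pos hi]
    have := h4 ⟨i, hi⟩
    have e1 : (⟨i, hi⟩ : Fin t).castSucc = (⟨min i t, by omega⟩ : Fin (t+1)) := by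
      apply Fin.ext; simp; omega
    have e2 : (⟨i, hi⟩ : Fin t).succ = (⟨min (i+1) t, by omega⟩ : Fin (t+1)) := by
      apply Fin.ext; simp; omega
    rw [e1, e2] at this
    exact this

/-- Extension at the initial endpoint contradicts maximality. -/
lemma ext_contra {t : ℕ} {v : ℕ → V} {f : ℕ → Finset V}
    (hM : ∀ s w g, NPath E s w g → s ≤ t)
    (h : NPath E t v f) {e : Finset V} {x : V} (he : e ∈ E)
    (hoff : ∀ i < t, f i ≠ e)
    (hv0 : v 0 ∈ e) (hx : x ∈ e) (hnew : ∀ i ≤ t, v i ≠ x) : False := by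
  obtain ⟨h1, h2, h3, h4⟩ := h
  have hnp : NPath E (t+1) (fun i => if i = 0 then x else v (i-1))
      (fun i => if i = 0 then e else f (i-1)) := by
    refine ⟨?_, ?_, ?_, ?_⟩
    · intro i hi j hj hij
      dsimp only at hij
      by_cases hi0 : i = 0 <;> by_cases hj0 : j = 0
      · omega
      · rw [if_pos hi0, if_neg hj0] at hij
        exact absurd hij (hnew (j-1) (by omega)).symm
      · rw [if_neg hi0, if_pos hj0] at hij
        exact absurd hij.symm (hnew (i-1) (by omega)).symm
      · rw [if_neg hi0, if_neg hj0] at hij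
        have := h1 (i-1) (by omega) (j-1) (by omega) hij
        omega
    · intro i hi j hj hij
      dsimp only at hij
      by_cases hi0 : i = 0 <;> by_cases hj0 : j = 0
      · omega
      · rw [if_pos hi0, if_neg hj0] at hij
        exact absurd hij.symm (hoff (j-1) (by omega))
      · rw [if_neg hi0, if_pos hj0] at hij
        exact absurd hij (hoff (i-1) (by omega))
      · rw [if_neg hi0, if_neg hj0] at hij
        have := h2 (i-1) (by omega) (j-1) (by omega) hij
        omega
    · intro i hi
      dsimp only
      by_cases hi0 : i = 0
      · rw [if_pos hi0]; exact he
      · rw [if_neg hi0]; exact h3 (i-1) (by omega)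
    · intro i hi
      dsimp only
      by_cases hi0 : i = 0
      · subst hi0
        constructor
        · rw [if_pos rfl, if_pos rfl]; exact hx
        · rw [if_neg (by omega : ¬(0+1 = 0)), if_pos rfl]
          simpa using hv0
      · constructor
        · rw [if_neg hi0, if_neg hi0]
          exact (h4 (i-1) (by omega)).1
        · rw [if_neg (by omega : ¬(i+1 = 0)), if_neg hi0]
          have := (h4 (i-1) (by omega)).2
          have e1 : i - 1 + 1 = i + 1 - 1 := by omega
          rw [e1] at this
          exact this
  have := hM _ _ _ hnp
  omega

/-- Reversal of a path. -/
lemma NPath.rev {t : ℕ} {v : ℕ → V} {f : ℕ → Finset V} (h : NPath E t v f) :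
    NPath E t (fun i => v (t - i)) (fun i => f (t - 1 - i)) := by
  obtain ⟨h1, h2, h3, h4⟩ := h
  refine ⟨?_, ?_, ?_, ?_⟩
  · intro i hi j hj hij
    have := h1 (t-i) (by omega) (t-j) (by omega) hij
    omega
  · intro i hi j hj hij
    have := h2 (t-1-i) (by omega) (t-1-j) (by omega) hij
    omega
  · intro i hi
    exact h3 (t-1-i) (by omega)
  · intro i hi
    have := h4 (t-1-i) (by omega)
    dsimp only
    have e1 : t - i = t - 1 - i + 1 := by omega
    have e2 : t - (i+1) = t - 1 - i := by omega
    rw [e1, e2]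
    exact ⟨this.2, this.1⟩


/-- Rotation: given a chord `g` from `v 0` to `v j`, reverse the initial segment. -/
def rotV (v : ℕ → V) (j : ℕ) : ℕ → V := fun i => if i < j then v (j-1-i) else v i

def rotF (f : ℕ → Finset V) (g : Finset V) (j : ℕ) : ℕ → Finset V :=
  fun i => if i + 1 < j then f (j-2-i) else if i + 1 = j then g else f i

lemma rotV_lt {v : ℕ → V} {j i : ℕ} (h : i < j) : rotV v j i = v (j-1-i) := by
  simp only [rotV, if_pos h]

lemma rotV_ge {v : ℕ → V} {j i : ℕ} (h : j ≤ i) : rotV v j i = v i := by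
  simp only [rotV, if_neg (by omega : ¬ i < j)]

lemma rotV_zero {v : ℕ → V} {j : ℕ} (hj : 1 ≤ j) : rotV v j 0 = v (j-1) := by
  rw [rotV_lt (by omega)]
  congr 1

lemma rotV_range {v : ℕ → V} {j t : ℕ} {x : V} (hjt : j ≤ t) (h : ∀ i ≤ t, v i ≠ x) :
    ∀ i ≤ t, rotV v j i ≠ x := by
  intro i hi
  by_cases c : i < j
  · rw [rotV_lt c]; exact h _ (by omega)
  · rw [rotV_ge (by omega)]; exact h _ hi

lemma rotF_off {f : ℕ → Finset V} {g : Finset V} {j t : ℕ} {e : Finset V}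
    (hne : e ≠ g) (hoff : ∀ i < t, f i ≠ e) (hjt : j ≤ t) :
    ∀ i < t, rotF f g j i ≠ e := by
  intro i hi
  simp only [rotF]
  by_cases c1 : i + 1 < j
  · rw [if_pos c1]; exact hoff _ (by omega)
  · by_cases c2 : i + 1 = j
    · rw [if_neg c1, if_pos c2]; exact fun hh => hne hh.symm
    · rw [if_neg c1, if_neg c2]; exact hoff _ hi

lemma rotF_eq_g {f : ℕ → Finset V} {g : Finset V} {j : ℕ} (hj : 1 ≤ j) :
    rotF f g j (j-1) = g := by
  simp only [rotF]
  rw [if_neg (by omega : ¬ (j-1) + 1 < j), if_pos (by omega : (j-1) + 1 = j)]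

lemma rotF_jm1_off {t : ℕ} {v : ℕ → V} {f : ℕ → Finset V} (h : NPath E t v f)
    {g : Finset V} {j : ℕ} (hj1 : 1 ≤ j) (hjt : j ≤ t) (hne : g ≠ f (j-1)) :
    ∀ i < t, rotF f g j i ≠ f (j-1) := by
  intro i hi
  simp only [rotF]
  by_cases c1 : i + 1 < j
  · rw [if_pos c1]
    intro hh
    have := h.2.1 _ (by omega) _ (by omega) hh
    omega
  · by_cases c2 : i + 1 = j
    · rw [if_neg c1, if_pos c2]; exact hne
    · rw [if_neg c1, if_neg c2]
      intro hh
      have := h.2.1 _ hi _ (by omega) hh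
      omega

lemma NPath.rot {t : ℕ} {v : ℕ → V} {f : ℕ → Finset V} (h : NPath E t v f)
    {j : ℕ} {g : Finset V} (hj1 : 1 ≤ j) (hjt : j ≤ t)
    (hg : g ∈ E) (h0 : v 0 ∈ g) (hvj : v j ∈ g)
    (hgf : g = f (j-1) ∨ ∀ i < t, f i ≠ g) :
    NPath E t (rotV v j) (rotF f g j) := by
  obtain ⟨h1, h2, h3, h4⟩ := h
  refine ⟨?_, ?_, ?_, ?_⟩
  · intro i hi i' hi' hij
    simp only [rotV] at hij
    by_cases c1 : i < j <;> by_cases c2 : i' < j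
    · rw [if_pos c1, if_pos c2] at hij
      have := h1 _ (by omega) _ (by omega) hij; omega
    · rw [if_pos c1, if_neg c2] at hij
      have := h1 _ (by omega) _ (by omega) hij; omega
    · rw [if_neg c1, if_pos c2] at hij
      have := h1 _ (by omega) _ (by omega) hij; omega
    · rw [if_neg c1, if_neg c2] at hij
      exact h1 _ (by omega) _ (by omega) hij
  · intro i hi i' hi' hij
    simp only [rotF] at hij
    by_cases c1 : i + 1 < j
    · rw [if_pos c1] at hij
      by_cases c2 : i' + 1 < j
      · rw [if_pos c2] at hij
        have := h2 _ (by omega) _ (by omega) hij; omega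
      · by_cases c3 : i' + 1 = j
        · rw [if_neg c2, if_pos c3] at hij
          rcases hgf with hh | hh
          · have := h2 _ (by omega) _ (by omega) (hij.trans hh); omega
          · exact absurd hij (hh _ (by omega))
        · rw [if_neg c2, if_neg c3] at hij
          have := h2 _ (by omega) _ (by omega) hij; omega
    · by_cases c1' : i + 1 = j
      · rw [if_neg c1, if_pos c1'] at hij
        by_cases c2 : i' + 1 < j
        · rw [if_pos c2] at hij
          rcases hgf with hh | hh
          · have := h2 _ (by omega) _ (by omega) (hij.symm.trans hh); omega
          · exact absurd hij.symm (hh _ (by omega))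
        · by_cases c3 : i' + 1 = j
          · omega
          · rw [if_neg c2, if_neg c3] at hij
            rcases hgf with hh | hh
            · have := h2 _ (by omega) _ (by omega) (hij.symm.trans hh); omega
            · exact absurd hij.symm (hh _ (by omega))
      · rw [if_neg c1, if_neg c1'] at hij
        by_cases c2 : i' + 1 < j
        · rw [if_pos c2] at hij
          have := h2 _ (by omega) _ (by omega) hij; omega
        · by_cases c3 : i' + 1 = j
          · rw [if_neg c2, if_pos c3] at hij
            rcases hgf with hh | hh
            · have := h2 _ (by omega) _ (by omega) (hij.trans hh); omega
            · exact absurd hij (hh _ (by omega))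
          · rw [if_neg c2, if_neg c3] at hij
            exact h2 _ hi _ hi' hij
  · intro i hi
    simp only [rotF]
    by_cases c1 : i + 1 < j
    · rw [if_pos c1]; exact h3 _ (by omega)
    · by_cases c2 : i + 1 = j
      · rw [if_neg c1, if_pos c2]; exact hg
      · rw [if_neg c1, if_neg c2]; exact h3 _ hi
  · intro i hi
    simp only [rotV, rotF]
    by_cases c1 : i + 1 < j
    · constructor
      · rw [if_pos (by omega : i < j), if_pos c1]
        have := (h4 (j-2-i) (by omega)).2
        have e1 : j - 1 - i = j - 2 - i + 1 := by omega
        rw [e1]; exact this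
      · rw [if_pos c1, if_pos c1]
        have := (h4 (j-2-i) (by omega)).1
        have e1 : j - 1 - (i+1) = j - 2 - i := by omega
        rw [e1]; exact this
    · by_cases c2 : i + 1 = j
      · constructor
        · rw [if_pos (by omega : i < j), if_neg c1, if_pos c2]
          have e1 : j - 1 - i = 0 := by omega
          rw [e1]; exact h0
        · rw [if_neg c1, if_neg c1, if_pos c2, c2]
          exact hvj
      · constructor
        · rw [if_neg (by omega : ¬ i < j), if_neg c1, if_neg c2]
          exact (h4 i hi).1
        · rw [if_neg (by omega : ¬ i + 1 < j), if_neg c1, if_neg c2]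
          exact (h4 i hi).2


lemma mod_cancel {n p a b : ℕ} (ha : a ≤ n) (hb : b ≤ n)
    (h : (p + a) % (n+1) = (p + b) % (n+1)) : a = b := by
  have h' : a ≡ b [MOD n+1] := Nat.ModEq.add_left_cancel' p h
  have h'' : a % (n+1) = b % (n+1) := h'
  rw [Nat.mod_eq_of_lt (by omega), Nat.mod_eq_of_lt (by omega)] at h''
  exact h''

lemma Connected.exists_npath (hconn : Connected E) (a b : V) :
    ∃ (s : ℕ) (qv : ℕ → V) (qf : ℕ → Finset V), NPath E s qv qf ∧ qv 0 = a ∧ qv s = b := by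
  obtain ⟨s, q, g, hq, hq0, hqs⟩ := hconn a b
  refine ⟨s, _, _, hq.toNPath, ?_, ?_⟩
  · show q ⟨min 0 s, _⟩ = a
    rw [← hq0]; congr 1
  · show q ⟨min s s, _⟩ = b
    rw [← hqs]; congr 1; apply Fin.ext; simp [Fin.last]

/-- Going around the "cycle" formed by a path plus a closing edge, with an extra
pendant vertex, yields a longer path: contradiction. -/
lemma around_contra {t : ℕ} {v : ℕ → V} {f : ℕ → Finset V}
    (ht1 : 1 ≤ t)
    (hM : ∀ s w g, NPath E s w g → s ≤ t)
    (h : NPath E t v f) {e : Finset V} (he : e ∈ E) (hoff : ∀ i < t, f i ≠ e)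
    (h0 : v 0 ∈ e) (hte : v t ∈ e)
    {hh : Finset V} {x : V} {p' : ℕ} (hhE : hh ∈ E) (hp't : p' ≤ t)
    (hxh : x ∈ hh) (hxnew : ∀ i ≤ t, v i ≠ x) (hp'h : v p' ∈ hh)
    (hfree : ∀ i ≤ t, i ≠ (p' + t) % (t+1) → (if i = t then e else f i) ≠ hh) :
    False := by
  obtain ⟨h1, h2, h3, h4⟩ := h
  have modle : ∀ a : ℕ, (p' + a) % (t+1) ≤ t := by
    intro a
    have := Nat.mod_lt (p' + a) (show 0 < t+1 by omega)
    omega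
  have slotE : ∀ a ≤ t, (if a = t then e else f a) ∈ E := by
    intro a ha
    by_cases hat : a = t
    · rw [if_pos hat]; exact he
    · rw [if_neg hat]; exact h3 _ (by omega)
  have slotinj : ∀ a ≤ t, ∀ b ≤ t, (if a = t then e else f a) = (if b = t then e else f b) → a = b := by
    intro a ha b hb hab
    by_cases hat : a = t <;> by_cases hbt : b = t
    · omega
    · rw [if_pos hat, if_neg hbt] at hab; exact absurd hab.symm (hoff b (by omega))
    · rw [if_neg hat, if_pos hbt] at hab; exact absurd hab (hoff a (by omega))
    · rw [if_neg hat, if_neg hbt] at hab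
      exact h2 _ (by omega) _ (by omega) hab
  have hnp : NPath E (t+1)
      (fun i => if i = 0 then x else v ((p' + (i-1)) % (t+1)))
      (fun i => if i = 0 then hh else
        (if (p' + (i-1)) % (t+1) = t then e else f ((p' + (i-1)) % (t+1)))) := by
    refine ⟨?_, ?_, ?_, ?_⟩
    · intro i hi j hj hij
      dsimp only at hij
      by_cases hi0 : i = 0 <;> by_cases hj0 : j = 0
      · omega
      · rw [if_pos hi0, if_neg hj0] at hij
        exact absurd hij.symm (hxnew _ (modle _))
      · rw [if_neg hi0, if_pos hj0] at hij
        exact absurd hij (hxnew _ (modle _))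
      · rw [if_neg hi0, if_neg hj0] at hij
        have := h1 _ (modle _) _ (modle _) hij
        have := mod_cancel (n := t) (by omega) (by omega) this
        omega
    · intro i hi j hj hij
      dsimp only at hij
      by_cases hi0 : i = 0 <;> by_cases hj0 : j = 0
      · omega
      · rw [if_pos hi0, if_neg hj0] at hij
        refine absurd hij.symm (hfree _ (modle _) ?_)
        intro hcc
        have := mod_cancel (n := t) (by omega) (by omega) hcc
        omega
      · rw [if_neg hi0, if_pos hj0] at hij
        refine absurd hij (hfree _ (modle _) ?_)
        intro hcc
        have := mod_cancel (n := t) (by omega) (by omega) hcc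
        omega
      · rw [if_neg hi0, if_neg hj0] at hij
        have := slotinj _ (modle _) _ (modle _) hij
        have := mod_cancel (n := t) (by omega) (by omega) this
        omega
    · intro i hi
      dsimp only
      by_cases hi0 : i = 0
      · rw [if_pos hi0]; exact hhE
      · rw [if_neg hi0]; exact slotE _ (modle _)
    · intro i hi
      dsimp only
      by_cases hi0 : i = 0
      · subst hi0
        constructor
        · rw [if_pos rfl, if_pos rfl]; exact hxh
        · rw [if_neg (by omega : ¬(0+1 = 0)), if_pos rfl]
          have e1 : (p' + (0 + 1 - 1)) % (t+1) = p' := by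
            simp only [Nat.add_sub_cancel, Nat.add_zero]
            exact Nat.mod_eq_of_lt (by omega)
          rw [e1]; exact hp'h
      · have hsucc : (p' + (i + 1 - 1)) % (t+1)
            = ((p' + (i-1)) % (t+1) + 1) % (t+1) := by
          have e1 : p' + (i + 1 - 1) = (p' + (i-1)) + 1 := by omega
          rw [e1, Nat.add_mod (p' + (i-1)) 1, Nat.mod_eq_of_lt (show 1 < t+1 by omega)]
        constructor
        · rw [if_neg hi0, if_neg hi0]
          set a := (p' + (i-1)) % (t+1) with ha
          by_cases hat : a = t
          · rw [if_pos hat, hat]; exact hte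
          · rw [if_neg hat]; exact (h4 a (by have := modle (i-1); omega)).1
        · rw [if_neg (by omega : ¬(i+1 = 0)), if_neg hi0]
          rw [hsucc]
          set a := (p' + (i-1)) % (t+1) with ha
          by_cases hat : a = t
          · rw [if_pos hat, hat]
            rw [Nat.mod_self]
            exact h0
          · rw [if_neg hat]
            have halt : a + 1 < t + 1 := by have := modle (i-1); omega
            rw [Nat.mod_eq_of_lt halt]
            exact (h4 a (by have := modle (i-1); omega)).2
  have := hM _ _ _ hnp
  omega

/-- A closing edge for a longest path yields a contradiction (via connectivity and
an extra vertex). -/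
lemma close_contra (hconn : Connected E) {t : ℕ} {v : ℕ → V} {f : ℕ → Finset V}
    (hcard : t + 2 ≤ Fintype.card V) (ht1 : 1 ≤ t)
    (hM : ∀ s w g, NPath E s w g → s ≤ t)
    (h : NPath E t v f) {e : Finset V} (he : e ∈ E) (hoff : ∀ i < t, f i ≠ e)
    (h0 : v 0 ∈ e) (hte : v t ∈ e) : False := by
  classical
  have hexu : ∃ u : V, ∀ i ≤ t, v i ≠ u := by
    by_contra hc
    push_neg at hc
    have hsub : (Finset.univ : Finset V) ⊆ (Finset.range (t+1)).image v := by
      intro u _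
      obtain ⟨i, hi, hiu⟩ := hc u
      exact Finset.mem_image.mpr ⟨i, Finset.mem_range.mpr (by omega), hiu⟩
    have hc1 := Finset.card_le_card hsub
    have hc2 := Finset.card_image_le (s := Finset.range (t+1)) (f := v)
    simp only [Finset.card_range, Finset.card_univ] at hc1 hc2
    omega
  obtain ⟨u, hu⟩ := hexu
  obtain ⟨s, qv, qf, hqN, hq0, hqs⟩ := hconn.exists_npath u (v 0)
  have hPs : ∃ m, m ≤ s ∧ ∃ p, p ≤ t ∧ v p = qv m := ⟨s, le_refl _, 0, by omega, by rw [hqs]⟩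
  set m := Nat.find hPs with hm
  obtain ⟨hms, p, hpt, hpv⟩ := Nat.find_spec hPs
  have hm1 : 1 ≤ m := by
    rcases Nat.eq_zero_or_pos m with h0' | h0'
    · exfalso
      have := Nat.find_spec hPs
      rw [← hm, h0'] at this
      obtain ⟨-, p0, hp0, hp0v⟩ := this
      rw [hq0] at hp0v
      exact hu p0 hp0 hp0v
    · omega
  have hmin := Nat.find_min hPs (m := m - 1) (by omega)
  push_neg at hmin
  have hxnew : ∀ i ≤ t, v i ≠ qv (m-1) := by
    intro i hi
    exact hmin (by omega) i hi
  have hm1s : m - 1 < s := by omega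
  obtain ⟨hqN1, hqN2, hqN3, hqN4⟩ := hqN
  have hhE : qf (m-1) ∈ E := hqN3 _ hm1s
  have hxh : qv (m-1) ∈ qf (m-1) := (hqN4 _ hm1s).1
  have hqmh : qv m ∈ qf (m-1) := by
    have := (hqN4 _ hm1s).2
    have e1 : m - 1 + 1 = m := by omega
    rw [e1] at this
    exact this
  set hh := qf (m-1) with hhdef
  by_cases hc1 : ∃ i, i < t ∧ f i = hh
  · obtain ⟨i0, hi0t, hi0⟩ := hc1
    refine around_contra ht1 hM h
      he hoff h0 hte hhE (show i0 + 1 ≤ t by omega) hxh hxnew ?_ ?_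
    · rw [← hi0]; exact (h.2.2.2 i0 hi0t).2
    · intro i hi hine
      have homod : (i0 + 1 + t) % (t + 1) = i0 := by
        have e1 : i0 + 1 + t = i0 + (t + 1) := by omega
        rw [e1, Nat.add_mod_right]
        exact Nat.mod_eq_of_lt (by omega)
      rw [homod] at hine
      by_cases hit : i = t
      · rw [if_pos hit]
        intro hcc
        exact hoff i0 hi0t (hi0.trans hcc.symm)
      · rw [if_neg hit]
        intro hcc
        exact hine (h.2.1 i (by omega) i0 hi0t (hcc.trans hi0.symm))
  · push_neg at hc1
    by_cases hc2 : hh = e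
    · refine around_contra ht1 hM h he hoff h0 hte hhE (show (0:ℕ) ≤ t by omega)
        hxh hxnew (by rw [hc2] at hqmh ⊢; exact h0) ?_
      · intro i hi hine
        have homod : (0 + t) % (t + 1) = t := by
          rw [Nat.zero_add]; exact Nat.mod_eq_of_lt (by omega)
        rw [homod] at hine
        rw [if_neg hine]
        intro hcc
        exact hc1 i (by omega) hcc
    · refine around_contra ht1 hM h he hoff h0 hte hhE hpt hxh hxnew (by rw [hpv]; exact hqmh) ?_
      · intro i hi hine
        by_cases hit : i = t
        · rw [if_pos hit]
          exact fun hcc => hc2 (hcc.symm)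
        · rw [if_neg hit]
          intro hcc
          exact hc1 i (by omega) hcc


open Classical in
/-- Edges outside the path containing `w`. -/
noncomputable def offEdges (E : Finset (Finset V)) (t : ℕ) (f : ℕ → Finset V) (w : V) :
    Finset (Finset V) :=
  E.filter (fun e => (∀ i < t, f i ≠ e) ∧ w ∈ e)

open Classical in
/-- Indices of key vertices in `K(P,w)`. -/
noncomputable def Aidx (E : Finset (Finset V)) (t : ℕ) (v : ℕ → V) (f : ℕ → Finset V)
    (w : V) : Finset ℕ :=
  (Finset.range (t+1)).filter (fun i => v i ≠ w ∧ ∃ e ∈ offEdges E t f w, v i ∈ e)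

open Classical in
/-- Indices of path edges containing `v 0`. -/
noncomputable def Didx (t : ℕ) (v : ℕ → V) (f : ℕ → Finset V) : Finset ℕ :=
  (Finset.range t).filter (fun i => v 0 ∈ f i)

lemma minDeg_le_deg (E : Finset (Finset V)) (x : V) : minDeg E ≤ deg E x :=
  Nat.sInf_le ⟨x, rfl⟩

lemma deg_le_count {r t : ℕ} {v : ℕ → V} {f : ℕ → Finset V}
    (hE : IsRGraph r E) (hr : 1 ≤ r)
    (hM : ∀ s w g, NPath E s w g → s ≤ t) (h : NPath E t v f) :
    deg E (v 0) ≤ (Didx t v f).card + Nat.choose (Aidx E t v f (v 0)).card (r-1) := by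
  classical
  have hsplit := Finset.card_filter_add_card_filter_not
    (s := E.filter (fun e => v 0 ∈ e)) (p := fun e => ∃ i < t, f i = e)
  rw [deg] at *
  set s0 := E.filter (fun e => v 0 ∈ e)
  have hc1 : (s0.filter (fun e => ∃ i < t, f i = e)).card ≤ (Didx t v f).card := by
    have hsub : s0.filter (fun e => ∃ i < t, f i = e) ⊆ (Didx t v f).image f := by
      intro e hee
      simp only [Finset.mem_filter, s0] at hee
      obtain ⟨⟨heE, hv0e⟩, i, hit, hie⟩ := hee
      refine Finset.mem_image.mpr ⟨i, ?_, hie⟩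
      simp only [Didx, Finset.mem_filter, Finset.mem_range]
      exact ⟨hit, by rw [hie]; exact hv0e⟩
    calc (s0.filter (fun e => ∃ i < t, f i = e)).card
        ≤ ((Didx t v f).image f).card := Finset.card_le_card hsub
      _ ≤ (Didx t v f).card := Finset.card_image_le
  have hc2 : (s0.filter (fun e => ¬ ∃ i < t, f i = e)).card
      ≤ Nat.choose (Aidx E t v f (v 0)).card (r-1) := by
    set K := (Aidx E t v f (v 0)).image v with hK
    have hmap : ∀ e ∈ s0.filter (fun e => ¬ ∃ i < t, f i = e),
        e.erase (v 0) ∈ K.powersetCard (r-1) := by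
      intro e hee
      simp only [Finset.mem_filter, s0] at hee
      obtain ⟨⟨heE, hv0e⟩, hoffe⟩ := hee
      push_neg at hoffe
      have hoffe' : ∀ i < t, f i ≠ e := fun i hi => hoffe i hi
      rw [Finset.mem_powersetCard]
      constructor
      · intro x hx
        rw [Finset.mem_erase] at hx
        obtain ⟨hxne, hxe⟩ := hx
        have hxrange : ∃ i, i ≤ t ∧ v i = x := by
          by_contra hcc
          push_neg at hcc
          exact ext_contra hM h heE hoffe' hv0e hxe (fun i hi => hcc i hi)
        obtain ⟨i, hit, hix⟩ := hxrange
        rw [hK]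
        refine Finset.mem_image.mpr ⟨i, ?_, hix⟩
        simp only [Aidx, Finset.mem_filter, Finset.mem_range]
        refine ⟨by omega, by rw [hix]; exact hxne, e, ?_, by rw [hix]; exact hxe⟩
        simp only [offEdges, Finset.mem_filter]
        exact ⟨heE, hoffe', hv0e⟩
      · rw [Finset.card_erase_of_mem hv0e, hE e heE]
    have hinj : Set.InjOn (fun e : Finset V => e.erase (v 0))
        (↑(s0.filter (fun e => ¬ ∃ i < t, f i = e)) : Set (Finset V)) := by
      intro e1 he1 e2 he2 h12
      have hv1 : v 0 ∈ e1 := by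
        simp only [Finset.coe_filter, Set.mem_setOf_eq, Finset.mem_filter, s0] at he1
        tauto
      have hv2 : v 0 ∈ e2 := by
        simp only [Finset.coe_filter, Set.mem_setOf_eq, Finset.mem_filter, s0] at he2
        tauto
      have h12' : e1.erase (v 0) = e2.erase (v 0) := h12
      have hins : insert (v 0) (e1.erase (v 0)) = insert (v 0) (e2.erase (v 0)) := by rw [h12']
      rwa [Finset.insert_erase hv1, Finset.insert_erase hv2] at hins
    calc (s0.filter (fun e => ¬ ∃ i < t, f i = e)).card
        ≤ (K.powersetCard (r-1)).card := Finset.card_le_card_of_injOn _ hmap hinj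
      _ = Nat.choose K.card (r-1) := Finset.card_powersetCard _ _
      _ ≤ Nat.choose (Aidx E t v f (v 0)).card (r-1) :=
          Nat.choose_le_choose _ Finset.card_image_le
  omega

/-- Key disjointness: a crossing pair would close the path into a long cycle. -/
lemma cross_dis (hconn : Connected E) {t : ℕ} {v : ℕ → V} {f : ℕ → Finset V}
    (hcard : t + 2 ≤ Fintype.card V) (ht1 : 1 ≤ t)
    (hM : ∀ s w g, NPath E s w g → s ≤ t) (h : NPath E t v f) :
    ∀ s', s' ∈ Aidx E t v f (v t) →
      (s' + 1 ∈ Aidx E t v f (v 0) ∨ s' ∈ Didx t v f) → False := by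
  intro s' hsB hsU
  simp only [Aidx, Finset.mem_filter, Finset.mem_range] at hsB
  obtain ⟨hs't, hs'ne, e', he'mem, hs'e'⟩ := hsB
  simp only [offEdges, Finset.mem_filter] at he'mem
  obtain ⟨he'E, he'off, hte'⟩ := he'mem
  have hs'lt : s' < t := by
    rcases Nat.lt_or_ge s' t with h0 | h0
    · exact h0
    · exfalso; have : s' = t := by omega
      rw [this] at hs'ne; exact hs'ne rfl
  have hjt : s' + 1 ≤ t := by omega
  rcases hsU with hsA | hsD
  · simp only [Aidx, Finset.mem_filter, Finset.mem_range] at hsA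
    obtain ⟨-, hs1ne, e, hemem, hs1e⟩ := hsA
    simp only [offEdges, Finset.mem_filter] at hemem
    obtain ⟨heE, heoff, h0e⟩ := hemem
    by_cases hee' : e = e'
    · subst hee'
      exact close_contra hconn hcard ht1 hM h heE heoff h0e hte'
    · have hrot := h.rot (j := s'+1) (g := e) (by omega) hjt heE h0e hs1e (Or.inr heoff)
      have hoff' := rotF_off (f := f) (g := e) (j := s'+1) (e := e')
        (fun hc => hee' hc.symm) he'off hjt
      refine close_contra hconn hcard ht1 hM hrot he'E hoff' ?_ ?_
      · rw [rotV_zero (by omega)]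
        simpa using hs'e'
      · rw [rotV_ge hjt]
        exact hte'
  · simp only [Didx, Finset.mem_filter, Finset.mem_range] at hsD
    obtain ⟨hit, h0fi⟩ := hsD
    have hvj : v (s'+1) ∈ f s' := (h.2.2.2 s' hit).2
    have hrot := h.rot (j := s'+1) (g := f s') (by omega) hjt (h.2.2.1 s' hit) h0fi hvj
      (Or.inl rfl)
    have hoff' := rotF_off (f := f) (g := f s') (j := s'+1) (e := e')
      (fun hc => (he'off s' hit) hc.symm) he'off hjt
    refine close_contra hconn hcard ht1 hM hrot he'E hoff' ?_ ?_
    · rw [rotV_zero (by omega)]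
      simpa using hs'e'
    · rw [rotV_ge hjt]
      exact hte'

/-- The crossing inequality: `|A ∪ (D+1)| + |B| ≤ t`. -/
lemma crossing (hconn : Connected E) {t : ℕ} {v : ℕ → V} {f : ℕ → Finset V}
    (hcard : t + 2 ≤ Fintype.card V) (ht1 : 1 ≤ t)
    (hM : ∀ s w g, NPath E s w g → s ≤ t) (h : NPath E t v f) :
    (Aidx E t v f (v 0) ∪ (Didx t v f).image (· + 1)).card
      + (Aidx E t v f (v t)).card ≤ t := by
  classical
  set U := Aidx E t v f (v 0) ∪ (Didx t v f).image (· + 1) with hU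
  set B := Aidx E t v f (v t) with hB
  have hU1t : ∀ u ∈ U, 1 ≤ u ∧ u ≤ t := by
    intro u hu
    rw [hU, Finset.mem_union] at hu
    rcases hu with hu | hu
    · simp only [Aidx, Finset.mem_filter, Finset.mem_range] at hu
      obtain ⟨hut, hune, -⟩ := hu
      refine ⟨?_, by omega⟩
      rcases Nat.eq_zero_or_pos u with h0 | h0
      · exfalso; rw [h0] at hune; exact hune rfl
      · omega
    · rw [Finset.mem_image] at hu
      obtain ⟨i, hi, hiu⟩ := hu
      simp only [Didx, Finset.mem_filter, Finset.mem_range] at hi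
      omega
  have hBt : ∀ b ∈ B, b < t := by
    intro b hb
    simp only [hB, Aidx, Finset.mem_filter, Finset.mem_range] at hb
    obtain ⟨hbt, hbne, -⟩ := hb
    rcases Nat.lt_or_ge b t with h0 | h0
    · exact h0
    · exfalso; have : b = t := by omega
      rw [this] at hbne; exact hbne rfl
  have hdisj : ∀ s', s' ∈ B → s' + 1 ∈ U → False := by
    intro s' hsB hsU
    refine cross_dis hconn hcard ht1 hM h s' hsB ?_
    rw [hU, Finset.mem_union] at hsU
    rcases hsU with hh | hh
    · exact Or.inl hh
    · right
      rw [Finset.mem_image] at hh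
      obtain ⟨i, hi, hie⟩ := hh
      have : i = s' := by omega
      rwa [← this]
  -- now count
  have hUcard : U.card = (U.image (· - 1)).card := by
    rw [Finset.card_image_of_injOn]
    intro a ha b hb hab
    have := hU1t a ha
    have := hU1t b hb
    simp only at hab
    omega
  have hsub : U.image (· - 1) ∪ B ⊆ Finset.range t := by
    intro x hx
    rw [Finset.mem_union] at hx
    rcases hx with hx | hx
    · rw [Finset.mem_image] at hx
      obtain ⟨a, ha, hax⟩ := hx
      have := hU1t a ha
      rw [Finset.mem_range]
      omega
    · rw [Finset.mem_range]; exact hBt _ hx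
  have hdisj2 : Disjoint (U.image (· - 1)) B := by
    rw [Finset.disjoint_left]
    intro x hx hxB
    rw [Finset.mem_image] at hx
    obtain ⟨a, ha, hax⟩ := hx
    have h1a := hU1t a ha
    have : x + 1 = a := by omega
    exact hdisj x hxB (by rw [this]; exact ha)
  have := Finset.card_le_card hsub
  rw [Finset.card_union_of_disjoint hdisj2, Finset.card_range] at this
  omega

lemma offEdges_rev {t : ℕ} (f : ℕ → Finset V) (w : V) :
    offEdges E t (fun i => f (t-1-i)) w = offEdges E t f w := by
  ext e
  simp only [offEdges, Finset.mem_filter]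
  constructor
  · rintro ⟨h1, h2, h3⟩
    refine ⟨h1, ?_, h3⟩
    intro i hi
    have := h2 (t-1-i) (by omega)
    have e1 : t - 1 - (t-1-i) = i := by omega
    rwa [e1] at this
  · rintro ⟨h1, h2, h3⟩
    exact ⟨h1, fun i _ => h2 (t-1-i) (by omega), h3⟩

lemma Aidx_rev_card {t : ℕ} (v : ℕ → V) (f : ℕ → Finset V) (w : V) :
    (Aidx E t (fun i => v (t-i)) (fun i => f (t-1-i)) w).card
      = (Aidx E t v f w).card := by
  apply Finset.card_bij (fun i _ => t - i)
  · intro a ha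
    simp only [Aidx, Finset.mem_filter, Finset.mem_range, offEdges_rev] at ha ⊢
    obtain ⟨h1, h2, h3⟩ := ha
    exact ⟨by omega, h2, h3⟩
  · intro a ha b hb hab
    simp only [Aidx, Finset.mem_filter, Finset.mem_range] at ha hb
    omega
  · intro b hb
    simp only [Aidx, Finset.mem_filter, Finset.mem_range, offEdges_rev] at hb ⊢
    obtain ⟨h1, h2, h3⟩ := hb
    refine ⟨t - b, ⟨by omega, ?_, ?_⟩, by omega⟩
    · rw [show t - (t - b) = b by omega]; exact h2
    · rw [show t - (t - b) = b by omega]; exact h3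

open Classical in
lemma ksetP_ncard {t : ℕ} {v : Fin (t+1) → V} {f : Fin t → Finset V}
    (hinj : Function.Injective v) (w : V) :
    (KsetP E v f w).ncard
      = (Aidx E t (fun i => v ⟨min i t, by omega⟩)
          (fun i => if hi : i < t then f ⟨i, hi⟩ else ∅) w).card := by
  classical
  have hvN : ∀ (i : ℕ) (hi : i ≤ t), v ⟨min i t, by omega⟩ = v ⟨i, by omega⟩ := by
    intro i hi; congr 1; apply Fin.ext; simp; omega
  have hoffiff : ∀ e : Finset V, (e ∉ Set.range f) ↔
      (∀ j, j < t → (fun i : ℕ => if hi : i < t then f ⟨i, hi⟩ else ∅) j ≠ e) := by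
    intro e
    constructor
    · intro he j hj
      dsimp only; rw [dif_pos hj]
      exact fun hc => he ⟨_, hc⟩
    · intro he
      rintro ⟨j, hj⟩
      have := he j.val j.isLt
      dsimp only at this
      rw [dif_pos j.isLt] at this
      exact this (by rw [Fin.eta]; exact hj)
  have hset : KsetP E v f w = ↑((Aidx E t (fun i => v ⟨min i t, by omega⟩)
      (fun i => if hi : i < t then f ⟨i, hi⟩ else ∅) w).image
        (fun i : ℕ => v ⟨min i t, by omega⟩)) := by
    ext x
    simp only [KsetP, EO, Set.mem_setOf_eq, Finset.coe_image, Set.mem_image,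
      Finset.mem_coe, Aidx, Finset.mem_filter, Finset.mem_range, offEdges]
    constructor
    · rintro ⟨⟨i, hix⟩, hxw, e, ⟨heE, heoff, hwe⟩, hxe⟩
      refine ⟨i.val, ⟨i.isLt, ?_, e, ⟨heE, fun j hj => (hoffiff e).mp heoff j hj, hwe⟩, ?_⟩, ?_⟩
      · rw [hvN i.val (by omega), Fin.eta, hix]; exact hxw
      · rw [hvN i.val (by omega), Fin.eta, hix]; exact hxe
      · rw [hvN i.val (by omega), Fin.eta, hix]
    · rintro ⟨a, ⟨hat, hane, e, ⟨heE, heoff, hwe⟩, hae⟩, hax⟩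
      rw [hvN a (by omega)] at hax hane hae
      refine ⟨⟨⟨a, by omega⟩, hax⟩, by rw [← hax]; exact hane, e,
        ⟨heE, (hoffiff e).mpr heoff, hwe⟩, by rw [← hax]; exact hae⟩
  rw [hset, Set.ncard_coe_finset]
  apply Finset.card_image_of_injOn
  intro a ha b hb hab
  simp only [Finset.mem_coe, Aidx, Finset.mem_filter, Finset.mem_range] at ha hb
  dsimp only at hab
  rw [hvN a (by omega), hvN b (by omega)] at hab
  have := hinj hab
  have := congrArg Fin.val this
  simpa using this


/-- General degree split at any vertex. -/
lemma deg_split {t : ℕ} {v : ℕ → V} {f : ℕ → Finset V} (h : NPath E t v f) (w : V) :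
    deg E w ≤ ((Finset.range t).filter (fun i => w ∈ f i)).card + (offEdges E t f w).card := by
  classical
  have hsplit := Finset.card_filter_add_card_filter_not
    (s := E.filter (fun e => w ∈ e)) (p := fun e => ∃ i < t, f i = e)
  rw [deg] at *
  set s0 := E.filter (fun e => w ∈ e)
  have hc1 : (s0.filter (fun e => ∃ i < t, f i = e)).card
      ≤ ((Finset.range t).filter (fun i => w ∈ f i)).card := by
    have hsub : s0.filter (fun e => ∃ i < t, f i = e)
        ⊆ ((Finset.range t).filter (fun i => w ∈ f i)).image f := by
      intro e hee
      simp only [Finset.mem_filter, s0] at hee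
      obtain ⟨⟨heE, hwe⟩, i, hit, hie⟩ := hee
      refine Finset.mem_image.mpr ⟨i, ?_, hie⟩
      simp only [Finset.mem_filter, Finset.mem_range]
      exact ⟨hit, by rw [hie]; exact hwe⟩
    calc (s0.filter (fun e => ∃ i < t, f i = e)).card
        ≤ (((Finset.range t).filter (fun i => w ∈ f i)).image f).card :=
          Finset.card_le_card hsub
      _ ≤ ((Finset.range t).filter (fun i => w ∈ f i)).card := Finset.card_image_le
  have hc2 : s0.filter (fun e => ¬ ∃ i < t, f i = e) = offEdges E t f w := by
    ext e
    simp only [Finset.mem_filter, s0, offEdges]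
    constructor
    · rintro ⟨⟨heE, hwe⟩, hoffe⟩
      push_neg at hoffe
      exact ⟨heE, fun i hi => hoffe i hi, hwe⟩
    · rintro ⟨heE, hoffe, hwe⟩
      refine ⟨⟨heE, hwe⟩, ?_⟩
      push_neg
      exact fun i hi => hoffe i hi
  rw [hc2] at hsplit
  omega

/-- A nonempty off-edge set at the first endpoint forces at least `r-1` key neighbours. -/
lemma off_nonempty_le {r t : ℕ} {v : ℕ → V} {f : ℕ → Finset V}
    (hE : IsRGraph r E) (hM : ∀ s w g, NPath E s w g → s ≤ t) (h : NPath E t v f)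
    (hne : (offEdges E t f (v 0)).Nonempty) :
    r - 1 ≤ (Aidx E t v f (v 0)).card := by
  classical
  obtain ⟨e, he⟩ := hne
  simp only [offEdges, Finset.mem_filter] at he
  obtain ⟨heE, heoff, hv0e⟩ := he
  have hsub : e.erase (v 0) ⊆ (Aidx E t v f (v 0)).image v := by
    intro x hx
    rw [Finset.mem_erase] at hx
    obtain ⟨hxne, hxe⟩ := hx
    have hxrange : ∃ i, i ≤ t ∧ v i = x := by
      by_contra hcc
      push_neg at hcc
      exact ext_contra hM h heE heoff hv0e hxe (fun i hi => hcc i hi)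
    obtain ⟨i, hit, hix⟩ := hxrange
    refine Finset.mem_image.mpr ⟨i, ?_, hix⟩
    simp only [Aidx, Finset.mem_filter, Finset.mem_range]
    refine ⟨by omega, by rw [hix]; exact hxne, e, ?_, by rw [hix]; exact hxe⟩
    simp only [offEdges, Finset.mem_filter]
    exact ⟨heE, heoff, hv0e⟩
  have h1 := Finset.card_le_card hsub
  have h2 : ((Aidx E t v f (v 0)).image v).card ≤ (Aidx E t v f (v 0)).card :=
    Finset.card_image_le
  rw [Finset.card_erase_of_mem hv0e, hE e heE] at h1
  omega

/-- The one-endpoint profile. -/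
lemma profile {k r : ℕ} (hconn : Connected E) {t : ℕ} {v : ℕ → V} {f : ℕ → Finset V}
    (hcard : t + 2 ≤ Fintype.card V) (ht1 : 1 ≤ t)
    (hM : ∀ s w g, NPath E s w g → s ≤ t) (h : NPath E t v f)
    (hE : IsRGraph r E) (hr : 1 ≤ r) (hdeg : k.choose (r-1) ≤ minDeg E) :
    k.choose (r-1) ≤ (Didx t v f).card + Nat.choose (Aidx E t v f (v 0)).card (r-1)
    ∧ (Aidx E t v f (v 0)).card + (Aidx E t v f (v t)).card ≤ t
    ∧ (Didx t v f).card + (Aidx E t v f (v t)).card ≤ t := by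
  have hd := deg_le_count hE hr hM h
  have hlow : k.choose (r-1) ≤ deg E (v 0) := le_trans hdeg (minDeg_le_deg E (v 0))
  have hcross := crossing hconn hcard ht1 hM h
  have hA_sub := Finset.card_le_card
    (Finset.subset_union_left (s₁ := Aidx E t v f (v 0)) (s₂ := (Didx t v f).image (· + 1)))
  have hD_sub := Finset.card_le_card
    (Finset.subset_union_right (s₁ := Aidx E t v f (v 0)) (s₂ := (Didx t v f).image (· + 1)))
  have hDcard : ((Didx t v f).image (· + 1)).card = (Didx t v f).card :=
    Finset.card_image_of_injective _ (fun x y hxy => by omega)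
  refine ⟨le_trans hlow hd, by omega, by omega⟩

/-- The two-endpoint profile. -/
lemma two_profile {k r : ℕ} (hconn : Connected E) {t : ℕ} {v : ℕ → V} {f : ℕ → Finset V}
    (hcard : t + 2 ≤ Fintype.card V) (ht1 : 1 ≤ t)
    (hM : ∀ s w g, NPath E s w g → s ≤ t) (h : NPath E t v f)
    (hE : IsRGraph r E) (hr : 1 ≤ r) (hdeg : k.choose (r-1) ≤ minDeg E) :
    ∃ d d' : ℕ,
      k.choose (r-1) ≤ d + Nat.choose (Aidx E t v f (v 0)).card (r-1) ∧
      k.choose (r-1) ≤ d' + Nat.choose (Aidx E t v f (v t)).card (r-1) ∧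
      (Aidx E t v f (v 0)).card + (Aidx E t v f (v t)).card ≤ t ∧
      d + (Aidx E t v f (v t)).card ≤ t ∧
      d' + (Aidx E t v f (v 0)).card ≤ t := by
  obtain ⟨p1, p2, p3⟩ := profile hconn hcard ht1 hM h hE hr hdeg
  obtain ⟨q1, q2, q3⟩ := profile hconn hcard ht1 hM h.rev hE hr hdeg
  simp only [Nat.sub_zero] at q1 q2 q3
  simp only [Nat.sub_self] at q2 q3
  rw [Aidx_rev_card] at q1 q2 q3
  exact ⟨(Didx t v f).card, (Didx t (fun i => v (t - i)) (fun i => f (t - 1 - i))).card,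
    p1, q1, p2, p3, q3⟩

lemma choose_two_le_of_le_half {n j : ℕ} (h2 : 2 ≤ j) (hle : j ≤ n / 2) :
    n.choose 2 ≤ n.choose j := by
  induction j with
  | zero => omega
  | succ m ih =>
    rcases Nat.lt_or_ge m 2 with hm | hm
    · have hm1 : m = 1 := by omega
      subst hm1; exact le_refl _
    · exact (ih hm (by omega)).trans (Nat.choose_le_succ_of_lt_half_left (by omega))

lemma choose_two_le_choose {n j : ℕ} (h2 : 2 ≤ j) (hj : j + 2 ≤ n) :
    n.choose 2 ≤ n.choose j := by
  rcases le_or_gt j (n/2) with hle | hgt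
  · exact choose_two_le_of_le_half h2 hle
  · have h1 : n.choose (n - j) = n.choose j := Nat.choose_symm (by omega)
    rw [← h1]
    exact choose_two_le_of_le_half (by omega) (by omega)

lemma pascal_kr {k r : ℕ} (hr4 : 4 ≤ r) (hkr : r < k) :
    (k-1).choose (r-2) + (k-1).choose (r-1) = k.choose (r-1) := by
  have e1 : k = (k-1) + 1 := by omega
  have e2 : r - 1 = (r-2) + 1 := by omega
  calc (k-1).choose (r-2) + (k-1).choose (r-1)
      = (k-1).choose (r-2) + (k-1).choose ((r-2)+1) := by rw [← e2]
    _ = ((k-1)+1).choose ((r-2)+1) := (Nat.choose_succ_succ _ _).symm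
    _ = k.choose (r-1) := by rw [← e1, ← e2]

/-- If `a ≤ k-1` then `d` must be huge. -/
lemma big_d {k r a d : ℕ} (hr4 : 4 ≤ r) (hkr : r < k) (ha : a ≤ k - 1)
    (h1 : k.choose (r-1) ≤ d + Nat.choose a (r-1)) :
    (k-1) * (k-2) / 2 ≤ d := by
  have hmono : Nat.choose a (r-1) ≤ Nat.choose (k-1) (r-1) := Nat.choose_le_choose _ ha
  have hp := pascal_kr hr4 hkr
  have h2 : (k-1).choose (r-2) ≤ d := by omega
  have h3 : (k-1).choose 2 ≤ (k-1).choose (r-2) :=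
    choose_two_le_choose (by omega) (by omega)
  have h4 : (k-1).choose 2 = (k-1) * (k-2) / 2 := by
    rw [Nat.choose_two_right]
    congr 1
  omega

lemma arithA {k r t a b d d' : ℕ} (hr4 : 4 ≤ r) (hkr : r < k) (ht : t + 1 ≤ 2*k)
    (h1 : k.choose (r-1) ≤ d + Nat.choose a (r-1))
    (h2 : k.choose (r-1) ≤ d' + Nat.choose b (r-1))
    (h3 : a + b ≤ t) (h4 : d + b ≤ t) (h5 : d' + a ≤ t) : False := by
  rcases Nat.lt_or_ge k 7 with hk7 | hk7
  · -- k = 5 or 6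
    rcases (show k = 5 ∨ k = 6 by omega) with hk | hk
    · subst hk
      have hr : r = 4 := by omega
      subst hr
      simp only [show (5:ℕ)-1 = 4 from rfl, show (4:ℕ)-1 = 3 from rfl,
        show Nat.choose 5 3 = 10 from by decide] at h1 h2
      rcases Nat.lt_or_ge a 5 with ha | ha
      · have hca : Nat.choose a 3 ≤ 4 := le_trans (Nat.choose_le_choose _ (by omega : a ≤ 4)) (by decide)
        have hb3 : b ≤ 3 := by omega
        have hcb : Nat.choose b 3 ≤ 1 := le_trans (Nat.choose_le_choose _ hb3) (by decide)
        have ha0 : a = 0 := by omega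
        subst ha0
        simp only [show Nat.choose 0 3 = 0 from by decide] at h1
        omega
      · have hb4 : b ≤ 4 := by omega
        have hcb : Nat.choose b 3 ≤ 4 := le_trans (Nat.choose_le_choose _ hb4) (by decide)
        omega
    · subst hk
      rcases (show r = 4 ∨ r = 5 by omega) with hr | hr <;> subst hr
      · simp only [show (6:ℕ)-1 = 5 from rfl, show (4:ℕ)-1 = 3 from rfl,
          show Nat.choose 6 3 = 20 from by decide] at h1 h2
        rcases Nat.lt_or_ge a 5 with ha | ha
        · have hca : Nat.choose a 3 ≤ 4 :=
            le_trans (Nat.choose_le_choose _ (by omega : a ≤ 4)) (by decide)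
          omega
        · rcases Nat.lt_or_ge b 5 with hb | hb
          · have hcb : Nat.choose b 3 ≤ 4 :=
              le_trans (Nat.choose_le_choose _ (by omega : b ≤ 4)) (by decide)
            omega
          · rcases Nat.lt_or_ge a 6 with ha6 | ha6
            · have hca : Nat.choose a 3 ≤ 10 :=
                le_trans (Nat.choose_le_choose _ (by omega : a ≤ 5)) (by decide)
              omega
            · have hb6 : b ≤ 5 := by omega
              have hcb : Nat.choose b 3 ≤ 10 :=
                le_trans (Nat.choose_le_choose _ hb6) (by decide)
              omega
      · simp only [show (6:ℕ)-1 = 5 from rfl, show (5:ℕ)-1 = 4 from rfl,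
          show Nat.choose 6 4 = 15 from by decide] at h1 h2
        rcases Nat.lt_or_ge a 5 with ha | ha
        · have hca : Nat.choose a 4 ≤ 1 :=
            le_trans (Nat.choose_le_choose _ (by omega : a ≤ 4)) (by decide)
          omega
        · rcases Nat.lt_or_ge b 5 with hb | hb
          · have hcb : Nat.choose b 4 ≤ 1 :=
              le_trans (Nat.choose_le_choose _ (by omega : b ≤ 4)) (by decide)
            omega
          · rcases Nat.lt_or_ge a 6 with ha6 | ha6
            · have hca : Nat.choose a 4 ≤ 5 :=
                le_trans (Nat.choose_le_choose _ (by omega : a ≤ 5)) (by decide)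
              omega
            · have hb6 : b ≤ 5 := by omega
              have hcb : Nat.choose b 4 ≤ 5 :=
                le_trans (Nat.choose_le_choose _ hb6) (by decide)
              omega
  · -- k ≥ 7
    obtain ⟨m, rfl⟩ : ∃ m, k = m + 7 := ⟨k - 7, by omega⟩
    have hkey : (m+7-1)*(m+7-2) ≥ 4*(m+7) := by
      rw [show m+7-1 = m+6 by omega, show m+7-2 = m+5 by omega]
      nlinarith
    have hdiv : 2*(m+7) ≤ (m+7-1)*(m+7-2)/2 := by omega
    rcases Nat.lt_or_ge a (m+7) with ha | ha
    · have := big_d hr4 hkr (by omega) h1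
      omega
    · have hb : b ≤ (m+7) - 1 := by omega
      have := big_d hr4 hkr hb h2
      omega

lemma arithB {k r t a b d d' : ℕ} (hr4 : 4 ≤ r) (hkr : r < k) (hk6 : 6 ≤ k) (ht : t = 2*k)
    (h1 : k.choose (r-1) ≤ d + Nat.choose a (r-1))
    (h2 : k.choose (r-1) ≤ d' + Nat.choose b (r-1))
    (h3 : a + b ≤ t) (h4 : d + b ≤ t) (h5 : d' + a ≤ t) : a = k ∧ b = k := by
  subst ht
  have key : ∀ a' b' d1 d1', k.choose (r-1) ≤ d1 + Nat.choose a' (r-1) →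
      k.choose (r-1) ≤ d1' + Nat.choose b' (r-1) →
      d1 + b' ≤ 2*k → d1' + a' ≤ 2*k → a' ≤ k - 1 → False := by
    intro a' b' d1 d1' k1 k2 k3 k4 ka
    rcases Nat.lt_or_ge k 7 with hk7 | hk7
    · have hk : k = 6 := by omega
      subst hk
      rcases (show r = 4 ∨ r = 5 by omega) with hr | hr <;> subst hr
      · simp only [show (6:ℕ)-1 = 5 from rfl, show (4:ℕ)-1 = 3 from rfl,
          show Nat.choose 6 3 = 20 from by decide] at k1 k2
        have hca : Nat.choose a' 3 ≤ 10 :=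
          le_trans (Nat.choose_le_choose _ (by omega : a' ≤ 5)) (by decide)
        have hd1 : 10 ≤ d1 := by omega
        have hb2 : b' ≤ 2 := by omega
        have hcb : Nat.choose b' 3 ≤ 0 :=
          le_trans (Nat.choose_le_choose _ hb2) (by decide)
        omega
      · simp only [show (6:ℕ)-1 = 5 from rfl, show (5:ℕ)-1 = 4 from rfl,
          show Nat.choose 6 4 = 15 from by decide] at k1 k2
        have hca : Nat.choose a' 4 ≤ 5 :=
          le_trans (Nat.choose_le_choose _ (by omega : a' ≤ 5)) (by decide)
        have hd1 : 10 ≤ d1 := by omega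
        have hb2 : b' ≤ 2 := by omega
        have hcb : Nat.choose b' 4 ≤ 0 :=
          le_trans (Nat.choose_le_choose _ hb2) (by decide)
        omega
    · obtain ⟨m, rfl⟩ : ∃ m, k = m + 7 := ⟨k - 7, by omega⟩
      have hkey : (m+7-1)*(m+7-2) ≥ 4*(m+7) + 2 := by
        rw [show m+7-1 = m+6 by omega, show m+7-2 = m+5 by omega]
        nlinarith
      have hdiv : 2*(m+7) + 1 ≤ (m+7-1)*(m+7-2)/2 := by omega
      have := big_d hr4 hkr ka k1
      omega
  constructor
  · rcases Nat.lt_or_ge a k with ha | ha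
    · exact absurd (key a b d d' h1 h2 h4 h5 (by omega)) (fun x => x)
    · rcases Nat.lt_or_ge b k with hb | hb
      · exact absurd (key b a d' d h2 h1 h5 h4 (by omega)) (fun x => x)
      · omega
  · rcases Nat.lt_or_ge b k with hb | hb
    · exact absurd (key b a d' d h2 h1 h5 h4 (by omega)) (fun x => x)
    · rcases Nat.lt_or_ge a k with ha | ha
      · exact absurd (key a b d d' h1 h2 h4 h5 (by omega)) (fun x => x)
      · omega

lemma dich5 {a b d d' : ℕ}
    (h1 : 10 ≤ d + Nat.choose a 3) (h2 : 10 ≤ d' + Nat.choose b 3)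
    (h3 : a + b ≤ 10) (h4 : d + b ≤ 10) (h5 : d' + a ≤ 10) :
    (a = 0 ∧ b = 0 ∧ d = 10 ∧ d' = 10) ∨ (a = 4 ∧ b = 4 ∧ d = 6 ∧ d' = 6)
      ∨ (a = 5 ∧ b = 5) := by
  rcases Nat.lt_or_ge a 5 with ha | ha
  · rcases Nat.lt_or_ge a 4 with ha3 | ha4
    · -- a ≤ 3
      have hca : Nat.choose a 3 ≤ 1 :=
        le_trans (Nat.choose_le_choose _ (by omega : a ≤ 3)) (by decide)
      have hb1 : b ≤ 1 := by omega
      have hcb : Nat.choose b 3 ≤ 0 :=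
        le_trans (Nat.choose_le_choose _ hb1) (by decide)
      have ha0 : a = 0 := by omega
      subst ha0
      simp only [show Nat.choose 0 3 = 0 from by decide] at h1
      have hb0 : b = 0 := by omega
      subst hb0
      simp only [show Nat.choose 0 3 = 0 from by decide] at h2
      exact Or.inl ⟨rfl, rfl, by omega, by omega⟩
    · -- a = 4
      have ha4' : a = 4 := by omega
      subst ha4'
      simp only [show Nat.choose 4 3 = 4 from by decide] at h1
      have hb4 : b ≤ 4 := by omega
      rcases Nat.lt_or_ge b 4 with hb3 | hb4'
      · have hcb : Nat.choose b 3 ≤ 1 :=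
          le_trans (Nat.choose_le_choose _ (by omega : b ≤ 3)) (by decide)
        omega
      · have hb : b = 4 := by omega
        subst hb
        simp only [show Nat.choose 4 3 = 4 from by decide] at h2
        exact Or.inr (Or.inl ⟨rfl, rfl, by omega, by omega⟩)
  · rcases Nat.lt_or_ge b 5 with hb | hb
    · have hcb : Nat.choose b 3 ≤ 4 :=
        le_trans (Nat.choose_le_choose _ (by omega : b ≤ 4)) (by decide)
      omega
    · exact Or.inr (Or.inr ⟨by omega, by omega⟩)

/-- A longest path exists. -/
lemma exists_longest (hV : 0 < Fintype.card V) :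
    ∃ (v : ℕ → V) (f : ℕ → Finset V), NPath E (pathLen E) v f := by
  classical
  obtain ⟨x0⟩ := Fintype.card_pos_iff.mp hV
  have hne : {t | ∃ (v : Fin (t + 1) → V) (f : Fin t → Finset V),
      IsBergePath E t v f}.Nonempty := by
    refine ⟨0, fun _ => x0, Fin.elim0, ?_, ?_, ?_, ?_⟩
    · intro i j _
      have hi := i.isLt
      have hj := j.isLt
      apply Fin.ext
      omega
    · intro i; exact i.elim0
    · intro i; exact i.elim0
    · intro i; exact i.elim0
  have hbdd : BddAbove {t | ∃ (v : Fin (t + 1) → V) (f : Fin t → Finset V),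
      IsBergePath E t v f} := by
    refine ⟨Fintype.card V, fun s hs => ?_⟩
    obtain ⟨w, g, hw⟩ := hs
    have := Fintype.card_le_of_injective w hw.1
    simp only [Fintype.card_fin] at this
    omega
  have hmem := Nat.sSup_mem hne hbdd
  obtain ⟨vF, fF, hP⟩ := hmem
  exact ⟨_, _, hP.toNPath⟩

lemma one_le_pathLen {r k : ℕ} (hE : IsRGraph r E) (hr : 2 ≤ r)
    (hk : 1 ≤ k.choose (r-1)) (hdeg : k.choose (r-1) ≤ minDeg E)
    (hV : 0 < Fintype.card V) : 1 ≤ pathLen E := by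
  classical
  have hne : {d | ∃ x : V, deg E x = d}.Nonempty := by
    obtain ⟨x0⟩ := Fintype.card_pos_iff.mp hV
    exact ⟨deg E x0, x0, rfl⟩
  obtain ⟨x0, hx0⟩ := Nat.sInf_mem hne
  have hdx : 1 ≤ deg E x0 := by
    have : minDeg E = deg E x0 := hx0.symm
    omega
  have hfil : (E.filter (fun e => x0 ∈ e)).Nonempty := by
    rw [← Finset.card_pos]
    exact hdx
  obtain ⟨e, he⟩ := hfil
  rw [Finset.mem_filter] at he
  have hc : 1 < e.card := by rw [hE e he.1]; omega
  obtain ⟨y, hy, hyx⟩ := Finset.exists_mem_ne hc x0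
  have hnp : NPath E 1 (fun i => if i = 0 then x0 else y) (fun _ => e) := by
    refine ⟨?_, ?_, fun _ _ => he.1, ?_⟩
    · intro i hi j hj hij
      dsimp only at hij
      by_cases hi0 : i = 0 <;> by_cases hj0 : j = 0
      · omega
      · rw [if_pos hi0, if_neg hj0] at hij; exact absurd hij.symm hyx
      · rw [if_neg hi0, if_pos hj0] at hij; exact absurd hij hyx
      · omega
    · intro i hi j hj _; omega
    · intro i hi
      have hi0 : i = 0 := by omega
      subst hi0
      dsimp only
      constructor
      · rw [if_pos rfl]; exact he.2
      · rw [if_neg (by omega : ¬(0+1=0))]; exact hy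
  exact hnp.le_pathLen


lemma offEdges_rotF_perm {t : ℕ} {f : ℕ → Finset V} {j : ℕ}
    (hj1 : 1 ≤ j) (hjt : j ≤ t) (w : V) :
    offEdges E t (rotF f (f (j-1)) j) w = offEdges E t f w := by
  ext e
  simp only [offEdges, Finset.mem_filter]
  constructor
  · rintro ⟨h1, h2, h3⟩
    refine ⟨h1, ?_, h3⟩
    intro m hm
    rcases Nat.lt_trichotomy m (j-1) with hc | hc | hc
    · have := h2 (j-2-m) (by omega)
      simp only [rotF] at this
      rw [if_pos (by omega : j-2-m+1 < j)] at this
      rwa [show j-2-(j-2-m) = m by omega] at this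
    · have := h2 (j-1) (by omega)
      rw [rotF_eq_g hj1] at this
      rw [hc]
      exact this
    · have := h2 m hm
      simp only [rotF] at this
      rwa [if_neg (by omega : ¬ m+1 < j), if_neg (by omega : ¬ m+1 = j)] at this
  · rintro ⟨h1, h2, h3⟩
    refine ⟨h1, ?_, h3⟩
    intro i hi
    simp only [rotF]
    by_cases c1 : i + 1 < j
    · rw [if_pos c1]; exact h2 _ (by omega)
    · by_cases c2 : i + 1 = j
      · rw [if_neg c1, if_pos c2]; exact h2 _ (by omega)
      · rw [if_neg c1, if_neg c2]; exact h2 _ hi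

lemma Aidx_off_empty {t : ℕ} {v : ℕ → V} {f : ℕ → Finset V} {w : V}
    (hoff : offEdges E t f w = ∅) : Aidx E t v f w = ∅ := by
  rw [Finset.eq_empty_iff_forall_notMem]
  intro i hi
  simp only [Aidx, Finset.mem_filter, Finset.mem_range] at hi
  obtain ⟨-, -, e, he, -⟩ := hi
  rw [hoff] at he
  exact absurd he (Finset.notMem_empty e)

/-- Cards of `Aidx` are preserved under rotation (given the off-edge sets agree). -/
lemma Aidx_rot_card {t : ℕ} {v : ℕ → V} {f : ℕ → Finset V} {g : Finset V} {j : ℕ}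
    (hjt : j ≤ t) (w : V)
    (hoffeq : offEdges E t (rotF f g j) w = offEdges E t f w) :
    (Aidx E t (rotV v j) (rotF f g j) w).card = (Aidx E t v f w).card := by
  apply Finset.card_bij (fun i _ => if i < j then j-1-i else i)
  · intro a ha
    simp only [Aidx, Finset.mem_filter, Finset.mem_range, hoffeq] at ha ⊢
    obtain ⟨h1, h2, h3⟩ := ha
    by_cases hc : a < j
    · rw [rotV_lt hc] at h2 h3
      rw [if_pos hc]
      exact ⟨by omega, h2, h3⟩
    · rw [rotV_ge (by omega)] at h2 h3
      rw [if_neg hc]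
      exact ⟨h1, h2, h3⟩
  · intro a ha b hb hab
    simp only [Aidx, Finset.mem_filter, Finset.mem_range] at ha hb
    by_cases hc : a < j <;> by_cases hc' : b < j <;>
      simp only [if_pos, if_neg, hc, hc', ite_true, ite_false] at hab <;> omega
  · intro b hb
    simp only [Aidx, Finset.mem_filter, Finset.mem_range, hoffeq] at hb ⊢
    obtain ⟨h1, h2, h3⟩ := hb
    by_cases hc : b < j
    · refine ⟨j-1-b, ⟨by omega, ?_, ?_⟩, by rw [if_pos (by omega : j-1-b < j)]; omega⟩
      · rw [rotV_lt (by omega), show j-1-(j-1-b) = b by omega]; exact h2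
      · rw [rotV_lt (by omega), show j-1-(j-1-b) = b by omega]; exact h3
    · refine ⟨b, ⟨h1, ?_, ?_⟩, by rw [if_neg hc]⟩
      · rw [rotV_ge (by omega)]; exact h2
      · rw [rotV_ge (by omega)]; exact h3

lemma five_in_four {S : Finset V} (hS : S.card = 4) {x1 x2 x3 x4 x5 : V}
    (h1 : x1 ∈ S) (h2 : x2 ∈ S) (h3 : x3 ∈ S) (h4 : x4 ∈ S) (h5 : x5 ∈ S)
    (d12 : x1 ≠ x2) (d13 : x1 ≠ x3) (d14 : x1 ≠ x4) (d15 : x1 ≠ x5)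
    (d23 : x2 ≠ x3) (d24 : x2 ≠ x4) (d25 : x2 ≠ x5)
    (d34 : x3 ≠ x4) (d35 : x3 ≠ x5) (d45 : x4 ≠ x5) : False := by
  have hsub : ({x1,x2,x3,x4,x5} : Finset V) ⊆ S := by
    intro z hz
    simp only [Finset.mem_insert, Finset.mem_singleton] at hz
    rcases hz with rfl|rfl|rfl|rfl|rfl <;> assumption
  have hcard : ({x1,x2,x3,x4,x5} : Finset V).card = 5 := by
    rw [Finset.card_insert_of_notMem (by simp [d12,d13,d14,d15]),
        Finset.card_insert_of_notMem (by simp [d23,d24,d25]),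
        Finset.card_insert_of_notMem (by simp [d34,d35]),
        Finset.card_insert_of_notMem (by simp [d45]),
        Finset.card_singleton]
  have := Finset.card_le_card hsub
  omega

lemma monster00 (hconn : Connected E) (hE : IsRGraph 4 E)
    (hcard : 12 ≤ Fintype.card V) (hdeg : Nat.choose 5 3 ≤ minDeg E)
    {v : ℕ → V} {f : ℕ → Finset V}
    (hM : ∀ s w g, NPath E s w g → s ≤ 10) (h : NPath E 10 v f)
    (hA : (Aidx E 10 v f (v 0)).card = 0)
    (hB : (Aidx E 10 v f (v 10)).card = 0) : False := by
  classical
  have ht1 : (1:ℕ) ≤ 10 := by omega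
  have hcard2 : (10:ℕ) + 2 ≤ Fintype.card V := by omega
  have offA : offEdges E 10 f (v 0) = ∅ := by
    by_contra hne
    rw [← ne_eq, ← Finset.nonempty_iff_ne_empty] at hne
    have := off_nonempty_le hE hM h hne
    omega
  have offB : offEdges E 10 f (v 10) = ∅ := by
    by_contra hne
    rw [← ne_eq, ← Finset.nonempty_iff_ne_empty] at hne
    have h2 : (offEdges E 10 (fun i => f (10-1-i)) (v (10-0))).Nonempty := by
      rw [offEdges_rev, Nat.sub_zero]
      exact hne
    have h3 := off_nonempty_le hE hM h.rev h2
    simp only [Nat.sub_zero] at h3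
    rw [Aidx_rev_card] at h3
    omega
  obtain ⟨p1, -, -⟩ := profile (k := 5) (r := 4) hconn hcard2 ht1 hM h hE (by omega) hdeg
  rw [hA] at p1
  simp only [show (4:ℕ)-1 = 3 from rfl, show Nat.choose 5 3 = 10 from by decide,
    show Nat.choose 0 3 = 0 from by decide] at p1
  have hDeq : Didx 10 v f = Finset.range 10 := by
    apply Finset.eq_of_subset_of_card_le
    · simp only [Didx]; exact Finset.filter_subset _ _
    · rw [Finset.card_range]; omega
  have hD : ∀ i, i < 10 → v 0 ∈ f i := by
    intro i hi
    have hmem : i ∈ Didx 10 v f := by rw [hDeq]; exact Finset.mem_range.mpr hi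
    simp only [Didx, Finset.mem_filter] at hmem
    exact hmem.2
  obtain ⟨q1, -, -⟩ := profile (k := 5) (r := 4) hconn hcard2 ht1 hM h.rev hE (by omega) hdeg
  simp only [Nat.sub_zero] at q1
  rw [Aidx_rev_card, hB] at q1
  simp only [show (4:ℕ)-1 = 3 from rfl, show Nat.choose 5 3 = 10 from by decide,
    show Nat.choose 0 3 = 0 from by decide] at q1
  have hDeq' : Didx 10 (fun i => v (10-i)) (fun i => f (10-1-i)) = Finset.range 10 := by
    apply Finset.eq_of_subset_of_card_le
    · simp only [Didx]; exact Finset.filter_subset _ _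
    · rw [Finset.card_range]; omega
  have hD' : ∀ i, i < 10 → v 10 ∈ f i := by
    intro i hi
    have hmem : (9 - i) ∈ Didx 10 (fun i => v (10-i)) (fun i => f (10-1-i)) := by
      rw [hDeq']; exact Finset.mem_range.mpr (by omega)
    simp only [Didx, Finset.mem_filter, Nat.sub_zero] at hmem
    have h2 := hmem.2
    rwa [show 10-1-(9-i) = i by omega] at h2
  have hne : ∀ a b : ℕ, a ≤ 10 → b ≤ 10 → a ≠ b → v a ≠ v b := by
    intro a b ha hb hab hq
    have := h.1 a ha b hb hq
    omega
  have hnotv1 : ∀ i, 2 ≤ i → i ≤ 8 → v 1 ∉ f i := by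
    intro i h2i h8i hv1
    exact five_in_four (hE (f i) (h.2.2.1 i (by omega)))
      hv1 ((h.2.2.2 i (by omega)).1) ((h.2.2.2 i (by omega)).2)
      (hD i (by omega)) (hD' i (by omega))
      (hne 1 i (by omega) (by omega) (by omega))
      (hne 1 (i+1) (by omega) (by omega) (by omega))
      (hne 1 0 (by omega) (by omega) (by omega))
      (hne 1 10 (by omega) (by omega) (by omega))
      (hne i (i+1) (by omega) (by omega) (by omega))
      (hne i 0 (by omega) (by omega) (by omega))
      (hne i 10 (by omega) (by omega) (by omega))
      (hne (i+1) 0 (by omega) (by omega) (by omega))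
      (hne (i+1) 10 (by omega) (by omega) (by omega))
      (hne 0 10 (by omega) (by omega) (by omega))
  have hdegsplit := deg_split h (v 1)
  have hdeg1 : (10:ℕ) ≤ deg E (v 1) := le_trans hdeg (minDeg_le_deg E (v 1))
  have hfilsub : (Finset.range 10).filter (fun i => v 1 ∈ f i) ⊆ ({0,1,9} : Finset ℕ) := by
    intro i hi
    simp only [Finset.mem_filter, Finset.mem_range] at hi
    simp only [Finset.mem_insert, Finset.mem_singleton]
    by_contra hc
    push_neg at hc
    exact hnotv1 i (by omega) (by omega) hi.2
  have hfilcard : ((Finset.range 10).filter (fun i => v 1 ∈ f i)).card ≤ 3 :=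
    le_trans (Finset.card_le_card hfilsub) (by decide)
  have hoffne : (offEdges E 10 f (v 1)).Nonempty := by
    rw [← Finset.card_pos]
    omega
  have hQ := h.rot (j := 2) (g := f 1) (by omega) (by omega) (h.2.2.1 1 (by omega))
    (hD 1 (by omega)) ((h.2.2.2 1 (by omega)).2) (Or.inl rfl)
  have hoffpermw : ∀ w, offEdges E 10 (rotF f (f 1) 2) w = offEdges E 10 f w :=
    fun w => offEdges_rotF_perm (E := E) (t := 10) (f := f) (j := 2) (by omega) (by omega) w
  obtain ⟨dq, dq', q1', q2', q3', q4', q5'⟩ :=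
    two_profile (k := 5) (r := 4) hconn hcard2 ht1 hM hQ hE (by omega) hdeg
  have eQ0 : rotV v 2 0 = v 1 := rotV_zero (by omega)
  have eQL : rotV v 2 10 = v 10 := rotV_ge (by omega)
  rw [eQ0] at q1' q3' q5'
  rw [eQL] at q2' q3' q4'
  have hbQ : (Aidx E 10 (rotV v 2) (rotF f (f 1) 2) (v 10)).card = 0 := by
    rw [Aidx_off_empty (by rw [hoffpermw]; exact offB), Finset.card_empty]
  have haQ : 3 ≤ (Aidx E 10 (rotV v 2) (rotF f (f 1) 2) (v 1)).card := by
    have h3 := off_nonempty_le hE hM hQ (by rw [eQ0, hoffpermw]; exact hoffne)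
    rw [eQ0] at h3
    exact h3
  simp only [show (4:ℕ)-1 = 3 from rfl, show Nat.choose 5 3 = 10 from by decide]
    at q1' q2'
  rcases dich5 q1' q2' q3' q4' q5' with hc | hc | hc
  · omega
  · omega
  · omega

lemma offEdges_rot_eq {t : ℕ} {f : ℕ → Finset V} {g : Finset V} {j : ℕ} {w : V}
    (hj1 : 1 ≤ j) (hjt : j ≤ t) (hwg : w ∉ g) (hwj : w ∉ f (j-1)) :
    offEdges E t (rotF f g j) w = offEdges E t f w := by
  ext e
  simp only [offEdges, Finset.mem_filter]
  constructor
  · rintro ⟨h1, h2, h3⟩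
    refine ⟨h1, ?_, h3⟩
    intro m hm hc
    by_cases hmj : m = j-1
    · rw [hmj] at hc; rw [hc] at hwj; exact hwj h3
    · rcases Nat.lt_trichotomy m (j-1) with hlt | heq | hgt
      · have := h2 (j-2-m) (by omega)
        simp only [rotF] at this
        rw [if_pos (by omega : j-2-m+1 < j), show j-2-(j-2-m) = m by omega] at this
        exact this hc
      · omega
      · have := h2 m hm
        simp only [rotF] at this
        rw [if_neg (by omega : ¬ m+1 < j), if_neg (by omega : ¬ m+1 = j)] at this
        exact this hc
  · rintro ⟨h1, h2, h3⟩
    refine ⟨h1, ?_, h3⟩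
    intro i hi hc
    simp only [rotF] at hc
    by_cases c1 : i + 1 < j
    · rw [if_pos c1] at hc; exact h2 _ (by omega) hc
    · by_cases c2 : i + 1 = j
      · rw [if_neg c1, if_pos c2] at hc
        rw [hc] at hwg; exact hwg h3
      · rw [if_neg c1, if_neg c2] at hc; exact h2 _ hi hc

lemma downclosed_eq {S : Finset ℕ} (hcard : S.card = 4) (h1 : ∀ i ∈ S, 1 ≤ i)
    (hcl : ∀ i ∈ S, 2 ≤ i → (i-1) ∈ S) : S = ({1,2,3,4} : Finset ℕ) := by
  have hne : S.Nonempty := by rw [← Finset.card_pos]; omega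
  have key : ∀ d : ℕ, ∀ i ∈ S, d + 1 ≤ i → (i - d) ∈ S := by
    intro d
    induction d with
    | zero => intro i hi _; simpa using hi
    | succ dd ih =>
      intro i hi hdi
      have h2 : (i - dd) ∈ S := ih i hi (by omega)
      have h3 : 2 ≤ i - dd := by omega
      have := hcl _ h2 h3
      rwa [show i - dd - 1 = i - (dd+1) by omega] at this
  have hMS : S.max' hne ∈ S := S.max'_mem hne
  have hsub1 : Finset.Icc 1 (S.max' hne) ⊆ S := by
    intro x hx
    rw [Finset.mem_Icc] at hx
    have := key (S.max' hne - x) _ hMS (by omega)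
    rwa [show S.max' hne - (S.max' hne - x) = x by
      have := h1 _ hMS; omega] at this
  have hsub2 : S ⊆ Finset.Icc 1 (S.max' hne) := by
    intro x hx
    rw [Finset.mem_Icc]
    exact ⟨h1 x hx, S.le_max' x hx⟩
  have hSeq : S = Finset.Icc 1 (S.max' hne) := le_antisymm hsub2 hsub1
  have h5 : (Finset.Icc 1 (S.max' hne)).card = 4 := by rw [← hSeq]; exact hcard
  rw [Nat.card_Icc] at h5
  have hM4 : S.max' hne = 4 := by omega
  rw [hSeq, hM4]
  decide

lemma Aidx_rev_eq {t : ℕ} (v : ℕ → V) (f : ℕ → Finset V) (w : V) :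
    Aidx E t (fun i => v (t-i)) (fun i => f (t-1-i)) w
      = (Aidx E t v f w).image (fun i => t - i) := by
  ext x
  simp only [Aidx, Finset.mem_filter, Finset.mem_range, offEdges_rev, Finset.mem_image]
  constructor
  · rintro ⟨h1, h2, h3⟩
    exact ⟨t - x, ⟨by omega, h2, h3⟩, by omega⟩
  · rintro ⟨y, ⟨hy1, hy2, hy3⟩, hyx⟩
    subst hyx
    refine ⟨by omega, ?_, ?_⟩
    · rw [show t - (t - y) = y by omega]; exact hy2
    · rw [show t - (t - y) = y by omega]; exact hy3

/-- Tightness at the `(4,4)` profile. -/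
lemma tightA (hconn : Connected E) (hE : IsRGraph 4 E)
    (hcard : 12 ≤ Fintype.card V) (hdeg : Nat.choose 5 3 ≤ minDeg E)
    {v : ℕ → V} {f : ℕ → Finset V}
    (hM : ∀ s w g, NPath E s w g → s ≤ 10) (h : NPath E 10 v f)
    (hB : (Aidx E 10 v f (v 10)).card = 4) :
    (Aidx E 10 v f (v 0)).card = 4 ∧ (Didx 10 v f).card = 6 ∧
      Aidx E 10 v f (v 0) ⊆ (Didx 10 v f).image (· + 1) := by
  have ht1 : (1:ℕ) ≤ 10 := by omega
  have hcard2 : (10:ℕ) + 2 ≤ Fintype.card V := by omega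
  obtain ⟨p1, p3, p4⟩ :=
    profile (k := 5) (r := 4) hconn hcard2 ht1 hM h hE (by omega) hdeg
  obtain ⟨q1, -, q3⟩ :=
    profile (k := 5) (r := 4) hconn hcard2 ht1 hM h.rev hE (by omega) hdeg
  simp only [Nat.sub_zero] at q1 q3
  simp only [Nat.sub_self] at q3
  rw [Aidx_rev_card] at q1 q3
  rw [hB] at p3 p4 q1
  simp only [show (4:ℕ)-1 = 3 from rfl, show Nat.choose 5 3 = 10 from by decide,
    show Nat.choose 4 3 = 4 from by decide] at p1 q1
  have ha4 : (Aidx E 10 v f (v 0)).card = 4 := by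
    rcases Nat.lt_or_ge (Aidx E 10 v f (v 0)).card 4 with hlt | hge
    · exfalso
      have : Nat.choose (Aidx E 10 v f (v 0)).card 3 ≤ 1 :=
        le_trans (Nat.choose_le_choose _ (by omega : (Aidx E 10 v f (v 0)).card ≤ 3))
          (by decide)
      omega
    · omega
  rw [ha4] at p1 q3
  simp only [show Nat.choose 4 3 = 4 from by decide] at p1
  have hd6 : (Didx 10 v f).card = 6 := by omega
  have hcross := crossing hconn hcard2 ht1 hM h
  rw [hB] at hcross
  have hDcard : ((Didx 10 v f).image (· + 1)).card = 6 := by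
    rw [Finset.card_image_of_injective _ (fun x y hxy => by omega)]
    exact hd6
  have hUD : (Didx 10 v f).image (· + 1)
      = Aidx E 10 v f (v 0) ∪ (Didx 10 v f).image (· + 1) := by
    apply Finset.eq_of_subset_of_card_le Finset.subset_union_right
    omega
  refine ⟨ha4, hd6, ?_⟩
  intro x hx
  rw [hUD]
  exact Finset.mem_union_left _ hx

/-- In the `(4,4)` configuration, `K_0`-indices are `{1,2,3,4}`. -/
lemma closure44 (hconn : Connected E) (hE : IsRGraph 4 E)
    (hcard : 12 ≤ Fintype.card V) (hdeg : Nat.choose 5 3 ≤ minDeg E)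
    {v : ℕ → V} {f : ℕ → Finset V}
    (hM : ∀ s w g, NPath E s w g → s ≤ 10) (h : NPath E 10 v f)
    (hB : (Aidx E 10 v f (v 10)).card = 4) :
    Aidx E 10 v f (v 0) = ({1,2,3,4} : Finset ℕ) := by
  obtain ⟨hA4, hd6, hAD⟩ := tightA hconn hE hcard hdeg hM h hB
  have ht1 : (1:ℕ) ≤ 10 := by omega
  have hcard2 : (10:ℕ)+2 ≤ Fintype.card V := by omega
  have hne : ∀ a b : ℕ, a ≤ 10 → b ≤ 10 → a ≠ b → v a ≠ v b := by
    intro a b ha hb hab hq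
    have := h.1 a ha b hb hq
    omega
  apply downclosed_eq hA4
  · intro i hi
    simp only [Aidx, Finset.mem_filter, Finset.mem_range] at hi
    rcases Nat.eq_zero_or_pos i with h0 | h0
    · exfalso; rw [h0] at hi; exact hi.2.1 rfl
    · omega
  · intro i hiA h2i
    have hiA' := hiA
    simp only [Aidx, Finset.mem_filter, Finset.mem_range] at hiA'
    obtain ⟨hi10, hine, e, hemem, hie⟩ := hiA'
    have hemem' := hemem
    simp only [offEdges, Finset.mem_filter] at hemem'
    obtain ⟨heE, heoff, h0e⟩ := hemem'
    have hv10e : v 10 ∉ e := fun hmem =>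
      close_contra hconn hcard2 ht1 hM h heE heoff h0e hmem
    have hi9 : i ≤ 9 := by
      rcases Nat.lt_or_ge i 10 with hlt | hge
      · omega
      · exfalso
        have hii : i = 10 := by omega
        rw [hii] at hie
        exact hv10e hie
    have hv10fi : v 10 ∉ f (i-1) := by
      intro hmem
      have hrevB : (10-i) ∈ Aidx E 10 (fun m => v (10-m)) (fun m => f (10-1-m))
          (v (10-10)) := by
        simp only [Aidx, Finset.mem_filter, Finset.mem_range, Nat.sub_self, offEdges_rev]
        refine ⟨by omega, ?_, e, ?_, ?_⟩
        · rw [show 10-(10-i) = i by omega]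
          exact hine
        · simp only [offEdges, Finset.mem_filter]
          exact ⟨heE, heoff, h0e⟩
        · rw [show 10-(10-i) = i by omega]
          exact hie
      have hrevD : (10-i) ∈ Didx 10 (fun m => v (10-m)) (fun m => f (10-1-m)) := by
        simp only [Didx, Finset.mem_filter, Finset.mem_range, Nat.sub_zero]
        refine ⟨by omega, ?_⟩
        rw [show 10-1-(10-i) = i-1 by omega]
        exact hmem
      exact cross_dis hconn hcard2 ht1 hM h.rev (10-i) hrevB (Or.inr hrevD)
    have hQ := h.rot (j := i) (g := e) (by omega) (by omega) heE h0e hie (Or.inr heoff)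
    have hoffeq := offEdges_rot_eq (E := E) (t := 10) (f := f) (g := e) (j := i) (w := v 10)
      (by omega) (by omega) hv10e hv10fi
    have hbQ : (Aidx E 10 (rotV v i) (rotF f e i) (rotV v i 10)).card = 4 := by
      rw [rotV_ge (by omega), Aidx_rot_card (by omega : i ≤ 10) (v 10) hoffeq]
      exact hB
    obtain ⟨-, -, hADQ⟩ := tightA hconn hE hcard hdeg hM hQ hbQ
    have hiAQ : i ∈ Aidx E 10 (rotV v i) (rotF f e i) (rotV v i 0) := by
      rw [rotV_zero (by omega)]
      simp only [Aidx, Finset.mem_filter, Finset.mem_range]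
      refine ⟨by omega, ?_, f (i-1), ?_, ?_⟩
      · rw [rotV_ge (le_refl i)]
        exact hne i (i-1) (by omega) (by omega) (by omega)
      · simp only [offEdges, Finset.mem_filter]
        refine ⟨h.2.2.1 (i-1) (by omega), ?_, (h.2.2.2 (i-1) (by omega)).1⟩
        exact rotF_jm1_off h (by omega) (by omega)
          (fun hc => (heoff (i-1) (by omega)) hc.symm)
      · rw [rotV_ge (le_refl i)]
        have := (h.2.2.2 (i-1) (by omega)).2
        rwa [show i-1+1 = i by omega] at this
    have hmm := hADQ hiAQ
    rw [Finset.mem_image] at hmm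
    obtain ⟨m, hmD, hmi⟩ := hmm
    have hmi' : m = i - 1 := by omega
    subst hmi'
    simp only [Didx, Finset.mem_filter, Finset.mem_range] at hmD
    have hv0e' := hmD.2
    rw [rotV_zero (by omega), rotF_eq_g (by omega)] at hv0e'
    simp only [Aidx, Finset.mem_filter, Finset.mem_range]
    refine ⟨by omega, ?_, e, hemem, hv0e'⟩
    exact hne (i-1) 0 (by omega) (by omega) (by omega)

/-- Edges whose successor index is a `K_0`-index consist of key vertices. -/
lemma edge_keys {v : ℕ → V} {f : ℕ → Finset V}
    (hM : ∀ s w g, NPath E s w g → s ≤ 10) (h : NPath E 10 v f)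
    {i : ℕ} (hi9 : i < 10) (hiA : i + 1 ∈ Aidx E 10 v f (v 0)) :
    ∀ x ∈ f i, ∃ m, m ≤ 10 ∧ v m = x := by
  intro x hx
  by_contra hc
  push_neg at hc
  simp only [Aidx, Finset.mem_filter, Finset.mem_range] at hiA
  obtain ⟨-, hine, e, hemem, hie⟩ := hiA
  simp only [offEdges, Finset.mem_filter] at hemem
  obtain ⟨heE, heoff, h0e⟩ := hemem
  have hQ := h.rot (j := i+1) (g := e) (by omega) (by omega) heE h0e hie (Or.inr heoff)
  refine ext_contra hM hQ (h.2.2.1 i hi9) ?_ ?_ hx ?_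
  · have := rotF_jm1_off h (by omega : 1 ≤ i+1) (by omega)
      (fun hcc => (heoff i hi9) hcc.symm)
    exact this
  · rw [rotV_zero (by omega)]
    exact (h.2.2.2 i hi9).1
  · intro m hm
    exact rotV_range (by omega) (fun p hp => hc p hp) m hm

lemma monster44 (hconn : Connected E) (hE : IsRGraph 4 E)
    (hcard : 12 ≤ Fintype.card V) (hdeg : Nat.choose 5 3 ≤ minDeg E)
    {v : ℕ → V} {f : ℕ → Finset V}
    (hM : ∀ s w g, NPath E s w g → s ≤ 10) (h : NPath E 10 v f)
    (hA : (Aidx E 10 v f (v 0)).card = 4)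
    (hB : (Aidx E 10 v f (v 10)).card = 4) : False := by
  classical
  have ht1 : (1:ℕ) ≤ 10 := by omega
  have hcard2 : (10:ℕ)+2 ≤ Fintype.card V := by omega
  have hne : ∀ a b : ℕ, a ≤ 10 → b ≤ 10 → a ≠ b → v a ≠ v b := by
    intro a b ha hb hab hq
    have := h.1 a ha b hb hq
    omega
  have hAset := closure44 hconn hE hcard hdeg hM h hB
  have hBrev : (Aidx E 10 (fun m => v (10-m)) (fun m => f (10-1-m)) (v (10-10))).card = 4 := by
    rw [show (10:ℕ)-10 = 0 from rfl, Aidx_rev_card]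
    exact hA
  have hArevset := closure44 hconn hE hcard hdeg hM h.rev hBrev
  have hBset : Aidx E 10 v f (v 10) = ({6,7,8,9} : Finset ℕ) := by
    have h1 : (Aidx E 10 v f (v 10)).image (fun i => 10 - i) = ({1,2,3,4} : Finset ℕ) := by
      rw [← Aidx_rev_eq]
      exact hArevset
    ext x
    simp only [Finset.mem_insert, Finset.mem_singleton]
    constructor
    · intro hx
      have hx10 : x ≤ 10 := by
        simp only [Aidx, Finset.mem_filter, Finset.mem_range] at hx; omega
      have hxi : 10 - x ∈ ({1,2,3,4} : Finset ℕ) := by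
        rw [← h1]; exact Finset.mem_image_of_mem _ hx
      simp only [Finset.mem_insert, Finset.mem_singleton] at hxi
      omega
    · intro hx
      have hxm : 10 - x ∈ (Aidx E 10 v f (v 10)).image (fun i => 10 - i) := by
        rw [h1]; simp only [Finset.mem_insert, Finset.mem_singleton]; omega
      rw [Finset.mem_image] at hxm
      obtain ⟨y, hy, hyx⟩ := hxm
      have hy10 : y ≤ 10 := by
        simp only [Aidx, Finset.mem_filter, Finset.mem_range] at hy; omega
      have hyx' : y = x := by omega
      rwa [← hyx']
  obtain ⟨hA4, hd6, hAD⟩ := tightA hconn hE hcard hdeg hM h hB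
  have hDsub : Didx 10 v f ⊆ Finset.range 6 := by
    intro m hm
    rw [Finset.mem_range]
    by_contra hge
    push_neg at hge
    have hm9 : m < 10 := by
      simp only [Didx, Finset.mem_filter, Finset.mem_range] at hm; exact hm.1
    have hmB : m ∈ Aidx E 10 v f (v 10) := by
      rw [hBset]; simp only [Finset.mem_insert, Finset.mem_singleton]; omega
    exact cross_dis hconn hcard2 ht1 hM h m hmB (Or.inr hm)
  have hDeq : Didx 10 v f = Finset.range 6 :=
    Finset.eq_of_subset_of_card_le hDsub (by rw [Finset.card_range]; omega)
  have hD : ∀ m, m < 6 → v 0 ∈ f m := by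
    intro m hm
    have hmem : m ∈ Didx 10 v f := by rw [hDeq]; exact Finset.mem_range.mpr hm
    simp only [Didx, Finset.mem_filter] at hmem
    exact hmem.2
  obtain ⟨hA4r, hd6r, hADr⟩ := tightA hconn hE hcard hdeg hM h.rev hBrev
  have hDsubr : Didx 10 (fun m => v (10-m)) (fun m => f (10-1-m)) ⊆ Finset.range 6 := by
    intro m hm
    rw [Finset.mem_range]
    by_contra hge
    push_neg at hge
    have hm9 : m < 10 := by
      simp only [Didx, Finset.mem_filter, Finset.mem_range] at hm; exact hm.1
    have hmB : m ∈ Aidx E 10 (fun m => v (10-m)) (fun m => f (10-1-m)) (v (10-10)) := by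
      have e1 : Aidx E 10 (fun m => v (10-m)) (fun m => f (10-1-m)) (v (10-10))
          = (Aidx E 10 v f (v 0)).image (fun i => 10 - i) := by
        rw [show (10:ℕ)-10 = 0 from rfl]
        exact Aidx_rev_eq v f (v 0)
      rw [e1, hAset, Finset.mem_image]
      refine ⟨10 - m, ?_, by omega⟩
      simp only [Finset.mem_insert, Finset.mem_singleton]
      omega
    exact cross_dis hconn hcard2 ht1 hM h.rev m hmB (Or.inr hm)
  have hDeqr : Didx 10 (fun m => v (10-m)) (fun m => f (10-1-m)) = Finset.range 6 :=
    Finset.eq_of_subset_of_card_le hDsubr (by rw [Finset.card_range]; omega)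
  have hD' : ∀ j, 4 ≤ j → j < 10 → v 10 ∈ f j := by
    intro j h4j hj10
    have hmem : (9 - j) ∈ Didx 10 (fun m => v (10-m)) (fun m => f (10-1-m)) := by
      rw [hDeqr]; exact Finset.mem_range.mpr (by omega)
    simp only [Didx, Finset.mem_filter, Finset.mem_range, Nat.sub_zero] at hmem
    have h2 := hmem.2
    rwa [show 10-1-(9-j) = j by omega] at h2
  have hf4 : ∀ x ∈ f 4, x = v 0 ∨ x = v 4 ∨ x = v 5 ∨ x = v 10 := by
    intro x hx
    by_contra hc
    push_neg at hc
    obtain ⟨hc0, hc4, hc5, hc10⟩ := hc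
    exact five_in_four (hE (f 4) (h.2.2.1 4 (by omega))) hx ((h.2.2.2 4 (by omega)).1)
      ((h.2.2.2 4 (by omega)).2) (hD 4 (by omega)) (hD' 4 (by omega) (by omega))
      hc4 hc5 hc0 hc10
      (hne 4 5 (by omega) (by omega) (by omega))
      (hne 4 0 (by omega) (by omega) (by omega))
      (hne 4 10 (by omega) (by omega) (by omega))
      (hne 5 0 (by omega) (by omega) (by omega))
      (hne 5 10 (by omega) (by omega) (by omega))
      (hne 0 10 (by omega) (by omega) (by omega))
  have hf5 : ∀ x ∈ f 5, x = v 0 ∨ x = v 5 ∨ x = v 6 ∨ x = v 10 := by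
    intro x hx
    by_contra hc
    push_neg at hc
    obtain ⟨hc0, hc5, hc6, hc10⟩ := hc
    exact five_in_four (hE (f 5) (h.2.2.1 5 (by omega))) hx ((h.2.2.2 5 (by omega)).1)
      ((h.2.2.2 5 (by omega)).2) (hD 5 (by omega)) (hD' 5 (by omega) (by omega))
      hc5 hc6 hc0 hc10
      (hne 5 6 (by omega) (by omega) (by omega))
      (hne 5 0 (by omega) (by omega) (by omega))
      (hne 5 10 (by omega) (by omega) (by omega))
      (hne 6 0 (by omega) (by omega) (by omega))
      (hne 6 10 (by omega) (by omega) (by omega))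
      (hne 0 10 (by omega) (by omega) (by omega))
  have hkeys : ∀ i, i < 10 → ∀ x ∈ f i, ∃ m, m ≤ 10 ∧ v m = x := by
    intro i hi10 x hx
    rcases Nat.lt_or_ge i 4 with hi4 | hi4
    · refine edge_keys hM h hi10 ?_ x hx
      rw [hAset]; simp only [Finset.mem_insert, Finset.mem_singleton]; omega
    · rcases Nat.lt_or_ge i 6 with hi6 | hi6
      · rcases (show i = 4 ∨ i = 5 by omega) with h45 | h45 <;> subst h45
        · rcases hf4 x hx with hh|hh|hh|hh
          exacts [⟨0, by omega, hh.symm⟩, ⟨4, by omega, hh.symm⟩,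
            ⟨5, by omega, hh.symm⟩, ⟨10, by omega, hh.symm⟩]
        · rcases hf5 x hx with hh|hh|hh|hh
          exacts [⟨0, by omega, hh.symm⟩, ⟨5, by omega, hh.symm⟩,
            ⟨6, by omega, hh.symm⟩, ⟨10, by omega, hh.symm⟩]
      · have hArev9 : (9-i) + 1 ∈ Aidx E 10 (fun m => v (10-m)) (fun m => f (10-1-m))
            (v (10-0)) := by
          rw [show (10:ℕ)-0 = 10 from rfl]
          rw [show v 10 = v (10-0) from rfl] at hArevset
          rw [hArevset]
          simp only [Finset.mem_insert, Finset.mem_singleton]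
          omega
        have hx' : x ∈ f (10-1-(9-i)) := by
          rwa [show 10-1-(9-i) = i by omega]
        obtain ⟨m, hm, hvm⟩ := edge_keys hM h.rev (i := 9 - i) (by omega) hArev9 x hx'
        exact ⟨10 - m, by omega, hvm⟩
  have hendpoint : ∀ p, p ≤ 10 → ∃ (w' : ℕ → V) (g' : ℕ → Finset V),
      NPath E 10 w' g' ∧ w' 0 = v p ∧ (∀ i, i ≤ 10 → ∃ m, m ≤ 10 ∧ w' i = v m) ∧
      (∀ i, i < 10 → ∃ m, m < 10 ∧ g' i = f m) := by
    intro p hp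
    rcases Nat.lt_or_ge p 6 with hp6 | hp6
    · rcases Nat.eq_zero_or_pos p with hp0 | hp0
      · subst hp0
        exact ⟨v, f, h, rfl, fun i hi => ⟨i, hi, rfl⟩, fun i hi => ⟨i, hi, rfl⟩⟩
      · have hQ := h.rot (j := p+1) (g := f p) (by omega) (by omega)
          (h.2.2.1 p (by omega)) (hD p (by omega)) ((h.2.2.2 p (by omega)).2) (Or.inl rfl)
        refine ⟨_, _, hQ, ?_, ?_, ?_⟩
        · rw [rotV_zero (by omega)]
          congr 1
        · intro i hi
          by_cases hc : i < p+1
          · exact ⟨p+1-1-i, by omega, by rw [rotV_lt hc]⟩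
          · exact ⟨i, hi, by rw [rotV_ge (by omega)]⟩
        · intro i hi
          simp only [rotF]
          by_cases c1 : i+1 < p+1
          · exact ⟨p+1-2-i, by omega, by rw [if_pos c1]⟩
          · by_cases c2 : i+1 = p+1
            · exact ⟨p, by omega, by rw [if_neg c1, if_pos c2]⟩
            · exact ⟨i, hi, by rw [if_neg c1, if_neg c2]⟩
    · have hg0 : (fun m => v (10-m)) 0 ∈ (fun m => f (10-1-m)) (10-p) := by
        show v (10-0) ∈ f (10-1-(10-p))
        rw [show (10:ℕ)-0 = 10 from rfl, show 10-1-(10-p) = p-1 by omega]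
        exact hD' (p-1) (by omega) (by omega)
      have hgj : (fun m => v (10-m)) ((10-p)+1) ∈ (fun m => f (10-1-m)) (10-p) := by
        show v (10-((10-p)+1)) ∈ f (10-1-(10-p))
        rw [show 10-((10-p)+1) = p-1 by omega, show 10-1-(10-p) = p-1 by omega]
        exact (h.2.2.2 (p-1) (by omega)).1
      have hQ := (h.rev).rot (j := (10-p)+1) (g := (fun m => f (10-1-m)) (10-p))
        (by omega) (by omega) (h.rev.2.2.1 (10-p) (by omega)) hg0 hgj (Or.inl rfl)
      refine ⟨_, _, hQ, ?_, ?_, ?_⟩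
      · rw [rotV_zero (by omega)]
        show v (10-((10-p)+1-1)) = v p
        congr 1
        omega
      · intro i hi
        by_cases hc : i < (10-p)+1
        · refine ⟨10-((10-p)+1-1-i), by omega, by rw [rotV_lt hc]⟩
        · refine ⟨10-i, by omega, by rw [rotV_ge (by omega)]⟩
      · intro i hi
        simp only [rotF]
        by_cases c1 : i+1 < (10-p)+1
        · exact ⟨10-1-((10-p)+1-2-i), by omega, by rw [if_pos c1]⟩
        · by_cases c2 : i+1 = (10-p)+1
          · exact ⟨10-1-(10-p), by omega, by rw [if_neg c1, if_pos c2]⟩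
          · exact ⟨10-1-i, by omega, by rw [if_neg c1, if_neg c2]⟩
  have hexu : ∃ u : V, ∀ i ≤ 10, v i ≠ u := by
    by_contra hcu
    push_neg at hcu
    have hsub : (Finset.univ : Finset V) ⊆ (Finset.range 11).image v := by
      intro u _
      obtain ⟨i, hi, hiu⟩ := hcu u
      exact Finset.mem_image.mpr ⟨i, Finset.mem_range.mpr (by omega), hiu⟩
    have hc1 := Finset.card_le_card hsub
    have hc2 := Finset.card_image_le (s := Finset.range 11) (f := v)
    simp only [Finset.card_range, Finset.card_univ] at hc1 hc2
    omega
  obtain ⟨u, hu⟩ := hexu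
  obtain ⟨s, qv, qf, hqN, hq0, hqs⟩ := hconn.exists_npath u (v 0)
  have hPs : ∃ m, m ≤ s ∧ ∃ p, p ≤ 10 ∧ v p = qv m :=
    ⟨s, le_refl _, 0, by omega, by rw [hqs]⟩
  obtain ⟨hms, p, hpt, hpv⟩ := Nat.find_spec hPs
  have hm1 : 1 ≤ Nat.find hPs := by
    rcases Nat.eq_zero_or_pos (Nat.find hPs) with h0' | h0'
    · exfalso
      have hspec := Nat.find_spec hPs
      rw [h0'] at hspec
      obtain ⟨-, p0, hp0, hp0v⟩ := hspec
      rw [hq0] at hp0v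
      exact hu p0 hp0 hp0v
    · omega
  have hmin := Nat.find_min hPs (m := Nat.find hPs - 1) (by omega)
  push_neg at hmin
  have hxnew : ∀ i ≤ 10, v i ≠ qv (Nat.find hPs - 1) :=
    fun i hi => hmin (by omega) i hi
  have hm1s : Nat.find hPs - 1 < s := by omega
  have hhE : qf (Nat.find hPs - 1) ∈ E := hqN.2.2.1 _ hm1s
  have hxh : qv (Nat.find hPs - 1) ∈ qf (Nat.find hPs - 1) := (hqN.2.2.2 _ hm1s).1
  have hqmh : qv (Nat.find hPs) ∈ qf (Nat.find hPs - 1) := by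
    have hadj := (hqN.2.2.2 _ hm1s).2
    rwa [show Nat.find hPs - 1 + 1 = Nat.find hPs by omega] at hadj
  obtain ⟨w', g', hw'np, hw'0, hw'keys, hw'edges⟩ := hendpoint p hpt
  refine ext_contra hM hw'np hhE ?_ ?_ hxh ?_
  · intro i hi hc
    obtain ⟨m', hm', hgm⟩ := hw'edges i hi
    have hxin : qv (Nat.find hPs - 1) ∈ f m' := by rw [← hgm, hc]; exact hxh
    obtain ⟨mm, hmm, hvmm⟩ := hkeys m' hm' _ hxin
    exact hxnew mm hmm hvmm
  · rw [hw'0, hpv]; exact hqmh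
  · intro i hi
    obtain ⟨m, hm, hwm⟩ := hw'keys i hi
    rw [hwm]
    exact hxnew m hm

end Machinery






/-- **Theorem (Statement 16).** Let `k > r ≥ 4`, `n > 2k+1`, and let `H` be a
connected `r`-graph on `n` vertices with `δ₁(H) ≥ C(k, r-1)`. Then `ℓ(H) ≥ 2k`;
moreover if `ℓ(H) = 2k` then every longest Berge path `P` (with key vertices
`v 0, ..., v 2k`) satisfies `|K_0(P)| = |K_{2k}(P)| = k`. -/
theorem pathLen_ge_and_Kset_card {V : Type*} [DecidableEq V] [Fintype V]
    (k r n : ℕ) (hr4 : 4 ≤ r) (hkr : k > r)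
    (hcard : Fintype.card V = n) (hn : n > 2 * k + 1)
    (E : Finset (Finset V)) (hE : IsRGraph r E) (hconn : Connected E)
    (hdeg : minDeg E ≥ k.choose (r - 1)) :
    2 * k ≤ pathLen E ∧
      (pathLen E = 2 * k →
        ∀ (v : Fin (2 * k + 1) → V) (f : Fin (2 * k) → Finset V),
          IsBergePath E (2 * k) v f →
            (KsetP E v f (v 0)).ncard = k ∧
            (KsetP E v f (v (Fin.last (2 * k)))).ncard = k) := by
  classical
  have hV : 0 < Fintype.card V := by rw [hcard]; omega
  have hM : ∀ s (w : ℕ → V) (g : ℕ → Finset V), NPath E s w g → s ≤ pathLen E :=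
    fun s w g hg => hg.le_pathLen
  have hchoosepos : 1 ≤ k.choose (r-1) := Nat.choose_pos (by omega)
  have ht1 : 1 ≤ pathLen E := one_le_pathLen hE (by omega) hchoosepos hdeg hV
  have hge : 2*k ≤ pathLen E := by
    by_contra hlt
    push_neg at hlt
    obtain ⟨v, f, hnp⟩ := exists_longest (E := E) hV
    have hcard2 : pathLen E + 2 ≤ Fintype.card V := by rw [hcard]; omega
    obtain ⟨d, d', p1, p2, p3, p4, p5⟩ :=
      two_profile hconn hcard2 ht1 hM hnp hE (by omega) hdeg
    exact arithA hr4 hkr (by omega) p1 p2 p3 p4 p5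
  refine ⟨hge, ?_⟩
  intro hL v f hP
  have hM' : ∀ s (w : ℕ → V) (g : ℕ → Finset V), NPath E s w g → s ≤ 2*k := by
    intro s w g hg
    have := hg.le_pathLen (E := E)
    omega
  have hcard2 : 2*k + 2 ≤ Fintype.card V := by rw [hcard]; omega
  have hnp := hP.toNPath
  have e0 : v (⟨min 0 (2*k), by omega⟩ : Fin (2*k+1)) = v 0 := by
    congr 1
  have eL : v (⟨min (2*k) (2*k), by omega⟩ : Fin (2*k+1)) = v (Fin.last (2*k)) := by
    congr 1; apply Fin.ext; simp [Fin.last]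
  obtain ⟨d, d', p1, p2, p3, p4, p5⟩ :=
    two_profile hconn hcard2 (by omega) hM' hnp hE (by omega) hdeg
  rw [e0] at p1 p3 p5
  rw [eL] at p2 p3 p4
  have hg1 := ksetP_ncard (E := E) (f := f) hP.1 (v 0)
  have hg2 := ksetP_ncard (E := E) (f := f) hP.1 (v (Fin.last (2*k)))
  rw [hg1, hg2]
  rcases Nat.lt_or_ge k 6 with hk5 | hk6
  · have hk : k = 5 := by omega
    have hr : r = 4 := by omega
    subst hk; subst hr
    simp only [show (4:ℕ)-1 = 3 from rfl, show Nat.choose 5 3 = 10 from by decide]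
      at p1 p2
    rcases dich5 p1 p2 (by omega) (by omega) (by omega) with hc | hc | hc
    · exact absurd (monster00 hconn hE (by omega) hdeg hM' hnp hc.1 hc.2.1)
        (fun x => x)
    · exact absurd (monster44 hconn hE (by omega) hdeg hM' hnp hc.1 hc.2.1)
        (fun x => x)
    · exact ⟨hc.1, hc.2⟩
  · exact arithB hr4 hkr hk6 rfl p1 p2 p3 p4 p5

end Berge
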